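/- arXiv:2508.05955 — 5 statements merged into one kernel-verified Lean document; each statement's English description precedes it below -/
import Mathlib

section
/- Let n ≥ 1 and γ ∈ ℤ₊ⁿ be a multi-index such that the spherical integral ∫_{𝕊^{n-1}} ω^{2γ} dω is positive. Fix α > 0 and β > 0, and define W_c(t,x) as the inverse Fourier transform of ξ ↦ e^{-β|ξ|²} cos(tα|ξ|). Then, as t → ∞, ‖∂ₓ^γ W_c(t)‖_{L²(ℝⁿ)}² converges to 2^{-n/2 - |γ| - 2} Γ(n/2 + |γ|) β^{-n/2 - |γ|} ∫_{𝕊^{n-1}} ω^{2γ} dω. -/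
open MeasureTheory Metric Real

/-- The surface measure on the unit sphere in `ℝⁿ`. -/
noncomputable def sphereMeasure (n : ℕ) :
    Measure (sphere (0 : EuclideanSpace ℝ (Fin n)) 1) :=
  (volume : Measure (EuclideanSpace ℝ (Fin n))).toSphere

section Aux
open Set Filter

lemma polar_decomp_aux (n : ℕ) (hn : 1 ≤ n) (γ : Fin n → ℕ) (f : ℝ → ℝ) :
    ∫ ξ : EuclideanSpace ℝ (Fin n), (∏ i, (ξ i) ^ (2 * γ i)) * f ‖ξ‖ =
      (∫ ω : sphere (0 : EuclideanSpace ℝ (Fin n)) 1,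
        (∏ i, ((ω : EuclideanSpace ℝ (Fin n)) i) ^ (2 * γ i)) ∂(sphereMeasure n)) *
      ∫ r in Ioi (0:ℝ), r ^ (n - 1 + 2 * ∑ i, γ i) * f r := by
  haveI : Nonempty (Fin n) := Fin.pos_iff_nonempty.mp hn
  set E := EuclideanSpace ℝ (Fin n)
  set μ : Measure E := volume
  have hdim : Module.finrank ℝ E = n := finrank_euclideanSpace_fin
  set M := ∑ i, γ i with hM
  set G : sphere (0:E) 1 × Ioi (0:ℝ) → ℝ :=
    fun p => (∏ i, ((p.1 : E) i) ^ (2 * γ i)) * ((p.2 : ℝ) ^ (2 * M) * f p.2) with hG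
  calc ∫ ξ : E, (∏ i, (ξ i) ^ (2 * γ i)) * f ‖ξ‖
      = ∫ x : ({0}ᶜ : Set E), (∏ i, ((x:E) i) ^ (2 * γ i)) * f ‖(x:E)‖ ∂(μ.comap Subtype.val) := by
        rw [integral_subtype_comap (measurableSet_singleton 0).compl
          (fun ξ : E => (∏ i, (ξ i) ^ (2 * γ i)) * f ‖ξ‖), MeasureTheory.restrict_compl_singleton]
    _ = ∫ p : sphere (0:E) 1 × Ioi (0:ℝ), G p
          ∂(μ.toSphere.prod (.volumeIoiPow (Module.finrank ℝ E - 1))) := by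
        rw [← μ.measurePreserving_homeomorphUnitSphereProd.integral_comp
          (Homeomorph.measurableEmbedding _) G]
        refine integral_congr_ae (Filter.Eventually.of_forall fun x => ?_)
        have hx : ‖(x:E)‖ ≠ 0 := norm_ne_zero_iff.2 x.2
        have key : ∀ i, ((‖(x:E)‖⁻¹ • (x:E)) i) = ‖(x:E)‖⁻¹ * (x:E) i := fun i => rfl
        simp only [hG, Function.comp_apply, homeomorphUnitSphereProd_apply_fst_coe,
          homeomorphUnitSphereProd_apply_snd_coe, key, mul_pow,
          Finset.prod_mul_distrib, Finset.prod_pow_eq_pow_sum, ← Finset.mul_sum]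
        rw [inv_pow]
        field_simp
        ring
    _ = (∫ ω : sphere (0:E) 1, (∏ i, ((ω : E) i) ^ (2 * γ i)) ∂μ.toSphere) *
        ∫ r : Ioi (0:ℝ), ((r:ℝ) ^ (2 * M) * f r)
          ∂(Measure.volumeIoiPow (Module.finrank ℝ E - 1)) := by
        exact integral_prod_mul (fun ω : sphere (0:E) 1 => (∏ i, ((ω : E) i) ^ (2 * γ i)))
          (fun r : Ioi (0:ℝ) => (r:ℝ) ^ (2 * M) * f r)
    _ = _ := by
        congr 1
        rw [hdim]
        simp only [Measure.volumeIoiPow, ENNReal.ofReal]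
        rw [integral_withDensity_eq_integral_smul
          ((measurable_subtype_coe.pow_const _).real_toNNReal),
          integral_subtype_comap measurableSet_Ioi
            (fun a : ℝ => (a ^ (n-1)).toNNReal • (a ^ (2 * M) * f a))]
        refine setIntegral_congr_fun measurableSet_Ioi fun r hr => ?_
        rw [NNReal.smul_def, Real.coe_toNNReal _ (pow_nonneg hr.out.le _), smul_eq_mul, pow_add]
        ring

lemma oneD_tendsto_aux (m : ℕ) (α β : ℝ) (hα : 0 < α) (hβ : 0 < β) :
    Tendsto (fun t : ℝ => ∫ r in Ioi (0:ℝ),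
        r ^ m * (Real.exp (-2 * β * r ^ 2) * Real.cos (t * α * r) ^ 2)) atTop
      (nhds ((1/2) * ∫ r in Ioi (0:ℝ), r ^ m * Real.exp (-2 * β * r ^ 2))) := by
  have h2β : (0:ℝ) < 2 * β := by linarith
  have hInt : IntegrableOn (fun r : ℝ => r ^ m * Real.exp (-2 * β * r ^ 2)) (Ioi 0) := by
    have h := integrableOn_rpow_mul_exp_neg_mul_sq h2β (s := (m:ℝ))
      (lt_of_lt_of_le neg_one_lt_zero (Nat.cast_nonneg m))
    refine (h.congr_fun (fun x hx => ?_) measurableSet_Ioi)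
    simp only [Real.rpow_natCast]
    ring_nf
  set g : ℝ → ℝ := (Ioi (0:ℝ)).indicator (fun r => r ^ m * Real.exp (-2 * β * r ^ 2)) with hg
  have hgInt : Integrable g := (integrable_indicator_iff measurableSet_Ioi).2 hInt
  have hRL := Real.tendsto_integral_exp_smul_cocompact (fun v : ℝ => (g v : ℂ))
  have hfreq : Tendsto (fun t : ℝ => t * α / π) atTop (Filter.cocompact ℝ) := by
    rw [cocompact_eq_atBot_atTop]
    exact ((tendsto_id.atTop_mul_const hα).atTop_div_const pi_pos).mono_right le_sup_right
  have hK : Tendsto (fun t : ℝ => ∫ v : ℝ, Real.cos (2 * t * α * v) * g v) atTop (nhds 0) := by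
    have hre : Tendsto (fun t : ℝ =>
        (∫ v : ℝ, Real.fourierChar (-(v * (t * α / π))) • ((g v : ℂ))).re) atTop
        (nhds ((0:ℂ).re)) :=
      (Complex.continuous_re.tendsto 0).comp (hRL.comp hfreq)
    simp only [Complex.zero_re] at hre
    refine Tendsto.congr (fun t => ?_) hre
    have hIntC : Integrable (fun v : ℝ => Real.fourierChar (-(v * (t * α / π))) • ((g v : ℂ))) := by
      simp only [Circle.smul_def]
      refine Integrable.bdd_mul (c := 1) hgInt.ofReal ?_ (Filter.Eventually.of_forall fun v => ?_)
      · exact (Continuous.aestronglyMeasurable (by fun_prop))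
      · exact (Circle.norm_coe _).le
    have h1 : ∀ v : ℝ, (Real.fourierChar (-(v * (t * α / π))) • ((g v : ℂ))).re
        = Real.cos (2 * t * α * v) * g v := by
      intro v
      rw [Circle.smul_def, Real.fourierChar_apply, smul_eq_mul,
        mul_comm _ ((g v : ℂ)), Complex.re_ofReal_mul, Complex.exp_ofReal_mul_I_re]
      have hp : 2 * π * -(v * (t * α / π)) = -(2 * t * α * v) := by
        field_simp
      rw [hp, Real.cos_neg]
      ring
    calc (∫ v : ℝ, Real.fourierChar (-(v * (t * α / π))) • ((g v : ℂ))).re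
        = Complex.reCLM (∫ v : ℝ, Real.fourierChar (-(v * (t * α / π))) • ((g v : ℂ))) := rfl
      _ = ∫ v : ℝ, Complex.reCLM (Real.fourierChar (-(v * (t * α / π))) • ((g v : ℂ))) :=
          (Complex.reCLM.integral_comp_comm hIntC).symm
      _ = ∫ v : ℝ, Real.cos (2 * t * α * v) * g v := by
          simp only [Complex.reCLM_apply, h1]
  have hsplit : ∀ t : ℝ, (∫ r in Ioi (0:ℝ),
        r ^ m * (Real.exp (-2 * β * r ^ 2) * Real.cos (t * α * r) ^ 2))
      = (1/2) * (∫ r in Ioi (0:ℝ), r ^ m * Real.exp (-2 * β * r ^ 2))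
        + (1/2) * ∫ v : ℝ, Real.cos (2 * t * α * v) * g v := by
    intro t
    have hInt2 : IntegrableOn
        (fun r : ℝ => Real.cos (2 * t * α * r) * (r ^ m * Real.exp (-2 * β * r ^ 2))) (Ioi 0) :=
      hInt.bdd_mul ((Real.continuous_cos.comp (by fun_prop)).aestronglyMeasurable)
        (c := 1) (Filter.Eventually.of_forall fun x => by simpa using Real.abs_cos_le_one _)
    have hKt : (∫ v : ℝ, Real.cos (2 * t * α * v) * g v)
        = ∫ r in Ioi (0:ℝ), Real.cos (2 * t * α * r) * (r ^ m * Real.exp (-2 * β * r ^ 2)) := by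
      rw [← integral_indicator measurableSet_Ioi]
      congr 1
      funext v
      by_cases hv : v ∈ Ioi (0:ℝ) <;> simp [hg, hv]
    rw [hKt]
    calc (∫ r in Ioi (0:ℝ), r ^ m * (Real.exp (-2 * β * r ^ 2) * Real.cos (t * α * r) ^ 2))
        = ∫ r in Ioi (0:ℝ), ((1/2) * (r ^ m * Real.exp (-2 * β * r ^ 2))
            + (1/2) * (Real.cos (2 * t * α * r) * (r ^ m * Real.exp (-2 * β * r ^ 2)))) := by
          refine setIntegral_congr_fun measurableSet_Ioi fun r _ => ?_
          have h2 : 2 * (t * α * r) = 2 * t * α * r := by ring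
          rw [Real.cos_sq, h2]
          ring
      _ = _ := by
          rw [integral_add (hInt.const_mul _) (hInt2.const_mul _), integral_const_mul,
            integral_const_mul]
  have hfinal := (tendsto_const_nhds (x := (1/2) * ∫ r in Ioi (0:ℝ),
      r ^ m * Real.exp (-2 * β * r ^ 2)) (f := atTop)).add (hK.const_mul (1/2))
  simp only [mul_zero, add_zero] at hfinal
  exact Tendsto.congr (fun t => (hsplit t).symm) hfinal

end Aux

/-- Asymptotics of `‖∂ₓ^γ W_c^{(α,β)}(t)‖_{L²}²`, computed on the Fourier side via
Plancherel: the squared norm is `∫ ξ^{2γ} e^{-2β|ξ|²} cos²(tα|ξ|) dξ`, and as `t → ∞`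
it converges to `2^{-n/2-|γ|-2} Γ(n/2+|γ|) β^{-n/2-|γ|} ∫_{𝕊^{n-1}} ω^{2γ} dω`. -/
theorem Wc_deriv_L2_norm_sq_tendsto (n : ℕ) (hn : 1 ≤ n) (γ : Fin n → ℕ)
    (hγ : 0 < ∫ ω : sphere (0 : EuclideanSpace ℝ (Fin n)) 1,
        (∏ i, ((ω : EuclideanSpace ℝ (Fin n)) i) ^ (2 * γ i)) ∂(sphereMeasure n))
    (α β : ℝ) (hα : 0 < α) (hβ : 0 < β) :
    Filter.Tendsto
      (fun t : ℝ => ∫ ξ : EuclideanSpace ℝ (Fin n),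
        (∏ i, (ξ i) ^ (2 * γ i)) * Real.exp (-2 * β * ‖ξ‖ ^ 2) *
          Real.cos (t * α * ‖ξ‖) ^ 2)
      Filter.atTop
      (nhds ((2 : ℝ) ^ (-(n : ℝ) / 2 - (∑ i, γ i : ℕ) - 2) *
        Real.Gamma ((n : ℝ) / 2 + (∑ i, γ i : ℕ)) *
        β ^ (-(n : ℝ) / 2 - (∑ i, γ i : ℕ)) *
        ∫ ω : sphere (0 : EuclideanSpace ℝ (Fin n)) 1,
          (∏ i, ((ω : EuclideanSpace ℝ (Fin n)) i) ^ (2 * γ i)) ∂(sphereMeasure n))) := by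
  classical
  set M : ℕ := ∑ i, γ i with hM
  set m : ℕ := n - 1 + 2 * M with hm
  set S : ℝ := ∫ ω : sphere (0 : EuclideanSpace ℝ (Fin n)) 1,
      (∏ i, ((ω : EuclideanSpace ℝ (Fin n)) i) ^ (2 * γ i)) ∂(sphereMeasure n) with hS
  have h2β : (0:ℝ) < 2 * β := by linarith
  -- pointwise polar decomposition
  have hpt : ∀ t : ℝ, (∫ ξ : EuclideanSpace ℝ (Fin n),
      (∏ i, (ξ i) ^ (2 * γ i)) * Real.exp (-2 * β * ‖ξ‖ ^ 2) * Real.cos (t * α * ‖ξ‖) ^ 2)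
      = S * ∫ r in Set.Ioi (0:ℝ),
          r ^ m * (Real.exp (-2 * β * r ^ 2) * Real.cos (t * α * r) ^ 2) := by
    intro t
    rw [← polar_decomp_aux n hn γ (fun r => Real.exp (-2 * β * r ^ 2) * Real.cos (t * α * r) ^ 2)]
    exact integral_congr_ae (Filter.Eventually.of_forall fun ξ => (mul_assoc _ _ _))
  -- the limit
  have hlim := (oneD_tendsto_aux m α β hα hβ).const_mul S
  have hlim' : Filter.Tendsto
      (fun t : ℝ => ∫ ξ : EuclideanSpace ℝ (Fin n),
        (∏ i, (ξ i) ^ (2 * γ i)) * Real.exp (-2 * β * ‖ξ‖ ^ 2) * Real.cos (t * α * ‖ξ‖) ^ 2)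
      Filter.atTop
      (nhds (S * ((1/2) * ∫ r in Set.Ioi (0:ℝ), r ^ m * Real.exp (-2 * β * r ^ 2)))) :=
    Filter.Tendsto.congr (fun t => (hpt t).symm) hlim
  -- identify the constant
  have hJ : (∫ r in Set.Ioi (0:ℝ), r ^ m * Real.exp (-2 * β * r ^ 2))
      = (2*β) ^ (-(((m:ℝ))+1)/2) * (1/2) * Real.Gamma (((m:ℝ)+1)/2) := by
    rw [← integral_rpow_mul_exp_neg_mul_rpow (two_pos)
      (lt_of_lt_of_le neg_one_lt_zero (Nat.cast_nonneg m)) h2β]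
    refine setIntegral_congr_fun measurableSet_Ioi fun x hx => ?_
    have hx2 : x ^ (2:ℝ) = x ^ (2:ℕ) := by
      rw [← Real.rpow_natCast x 2]
      norm_num
    rw [Real.rpow_natCast, hx2]
    ring_nf
  have hmr : ((m:ℝ) + 1) / 2 = (n:ℝ)/2 + (M:ℝ) := by
    have h1 : m + 1 = n + 2 * M := by omega
    have h2 : ((m:ℝ)) + 1 = (n:ℝ) + 2 * (M:ℝ) := by exact_mod_cast congrArg (Nat.cast : ℕ → ℝ) h1
    linarith
  have hexp : -(((m:ℝ))+1)/2 = -(n:ℝ)/2 - (M:ℝ) := by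
    rw [neg_div, hmr]
    ring
  have h4 : (2:ℝ) ^ (2:ℝ) = 4 := by
    have := Real.rpow_natCast (2:ℝ) 2
    norm_num at this
    linarith [this]
  have h2e : (2:ℝ) ^ (-(n:ℝ)/2 - (M:ℝ) - 2) = (2:ℝ) ^ (-(n:ℝ)/2 - (M:ℝ)) / 4 := by
    rw [Real.rpow_sub two_pos, h4]
  have h2b : (2*β) ^ (-(n:ℝ)/2 - (M:ℝ))
      = (2:ℝ) ^ (-(n:ℝ)/2 - (M:ℝ)) * β ^ (-(n:ℝ)/2 - (M:ℝ)) :=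
    Real.mul_rpow (by norm_num) hβ.le
  have hconst : S * ((1/2) * ∫ r in Set.Ioi (0:ℝ), r ^ m * Real.exp (-2 * β * r ^ 2))
      = (2 : ℝ) ^ (-(n : ℝ) / 2 - (M:ℝ) - 2) * Real.Gamma ((n : ℝ) / 2 + (M:ℝ)) *
        β ^ (-(n : ℝ) / 2 - (M:ℝ)) * S := by
    rw [hJ, hexp, hmr, h2b, h2e]
    ring
  push_cast
  rw [← hconst]
  exact hlim'
end

section
/- Let α > 0 and β > 0. There exist constants C₁, C₂ > 0, independent of β, such that for all t > 4π/(3α), C₁ e^{-β} t^{1/2} ≤ ( ∫_ℝ e^{-2βξ²} sin²(tαξ)/(α²ξ²) dξ )^{1/2} ≤ C₂ t^{1/2}. -/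
open MeasureTheory Real

set_option maxHeartbeats 1000000 in
/-- One-dimensional `L²` bounds for the multiplier `e^{-βξ²} sin(tαξ)/(αξ)`:
`C₁ e^{-β} √t ≤ ‖W_s^{(α,β)}(t)‖_{L²(ℝ)} ≤ C₂ √t` for `t > 4π/(3α)`,
with `C₁, C₂` independent of `β`. -/
theorem Ws_L2_bounds_dim_one (α : ℝ) (hα : 0 < α) :
    ∃ C₁ C₂ : ℝ, 0 < C₁ ∧ 0 < C₂ ∧ ∀ β : ℝ, 0 < β → ∀ t : ℝ, 4 * Real.pi / (3 * α) < t →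
      C₁ * Real.exp (-β) * Real.sqrt t ≤
        Real.sqrt (∫ ξ : ℝ,
          Real.exp (-2 * β * ξ ^ 2) * Real.sin (t * α * ξ) ^ 2 / (α ^ 2 * ξ ^ 2)) ∧
      Real.sqrt (∫ ξ : ℝ,
          Real.exp (-2 * β * ξ ^ 2) * Real.sin (t * α * ξ) ^ 2 / (α ^ 2 * ξ ^ 2)) ≤
        C₂ * Real.sqrt t := by
  have hπ : (0:ℝ) < Real.pi := Real.pi_pos
  refine ⟨1 / (2 * Real.sqrt (Real.pi * α)), Real.sqrt (2 * Real.pi / α), by positivity,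
    Real.sqrt_pos.2 (by positivity), ?_⟩
  intro β hβ t ht
  have ht0 : 0 < t := lt_trans (by positivity) ht
  have htα : 4 * Real.pi / 3 < t * α := by
    rw [div_lt_iff₀ (by positivity)] at ht
    nlinarith
  have htα0 : 0 < t * α := by positivity
  set f : ℝ → ℝ := fun ξ => Real.exp (-2 * β * ξ ^ 2) * Real.sin (t * α * ξ) ^ 2 / (α ^ 2 * ξ ^ 2)
    with hf
  set h : ℝ → ℝ := fun ξ => 2 * t ^ 2 * (1 + (t * α * ξ) ^ 2)⁻¹ with hh
  have hfnonneg : ∀ ξ, 0 ≤ f ξ := fun ξ => by positivity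
  -- pointwise upper bound
  have hfh : ∀ ξ, f ξ ≤ h ξ := by
    intro ξ
    rcases eq_or_ne ξ 0 with rfl | hξ0
    · simp [hf, hh]
      positivity
    · have hξ2 : 0 < α ^ 2 * ξ ^ 2 := by positivity
      have hx2 : 0 < 1 + (t * α * ξ) ^ 2 := by positivity
      simp only [hf, hh]
      rw [div_le_iff₀ hξ2]
      have hrw : 2 * t ^ 2 * (1 + (t * α * ξ) ^ 2)⁻¹ * (α ^ 2 * ξ ^ 2)
          = 2 * t ^ 2 * (α ^ 2 * ξ ^ 2) / (1 + (t * α * ξ) ^ 2) := by ring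
      rw [hrw, le_div_iff₀ hx2]
      have hexp : Real.exp (-2 * β * ξ ^ 2) ≤ 1 := by
        rw [Real.exp_le_one_iff]
        nlinarith [sq_nonneg ξ]
      have hsin1 : Real.sin (t * α * ξ) ^ 2 ≤ 1 := Real.sin_sq_le_one _
      have hsinx : Real.sin (t * α * ξ) ^ 2 ≤ (t * α * ξ) ^ 2 := Real.sin_sq_le_sq
      have hsinnn : 0 ≤ Real.sin (t * α * ξ) ^ 2 := sq_nonneg _
      have key : Real.sin (t * α * ξ) ^ 2 * (1 + (t * α * ξ) ^ 2) ≤ 2 * (t * α * ξ) ^ 2 := by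
        nlinarith [mul_nonneg (sub_nonneg.2 hsin1) (sq_nonneg (t * α * ξ))]
      have hLHS : 0 ≤ Real.sin (t * α * ξ) ^ 2 * (1 + (t * α * ξ) ^ 2) :=
        mul_nonneg hsinnn hx2.le
      nlinarith [mul_le_of_le_one_left hLHS hexp]
  -- integrability of h
  have hint_h : Integrable h := by
    have h1 : Integrable (fun ξ : ℝ => (1 + (t * α * ξ) ^ 2)⁻¹) := by
      exact (integrable_comp_mul_left_iff (fun y : ℝ => (1 + y ^ 2)⁻¹) htα0.ne').2
        integrable_inv_one_add_sq
    exact h1.const_mul (2 * t ^ 2)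
  -- integrability of f
  have hint_f : Integrable f := by
    refine hint_h.mono ?_ ?_
    · apply Measurable.aestronglyMeasurable
      fun_prop
    · filter_upwards with ξ
      rw [Real.norm_eq_abs, Real.norm_eq_abs, abs_of_nonneg (hfnonneg ξ),
        abs_of_nonneg (by positivity : (0:ℝ) ≤ h ξ)]
      exact hfh ξ
  -- value of ∫ h
  have hIh : ∫ ξ : ℝ, h ξ = 2 * Real.pi * t / α := by
    rw [hh]
    simp_rw [show ∀ ξ : ℝ, 2 * t ^ 2 * (1 + (t * α * ξ) ^ 2)⁻¹
        = 2 * t ^ 2 * (fun y : ℝ => (1 + y ^ 2)⁻¹) ((t * α) * ξ) from fun ξ => by ring_nf]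
    rw [MeasureTheory.integral_const_mul, MeasureTheory.Measure.integral_comp_mul_left (fun y : ℝ => (1 + y ^ 2)⁻¹)
      (t * α), integral_univ_inv_one_add_sq]
    rw [abs_of_pos (by positivity : (0:ℝ) < (t * α)⁻¹)]
    rw [smul_eq_mul]
    field_simp
  have hupper : ∫ ξ : ℝ, f ξ ≤ 2 * Real.pi * t / α := by
    rw [← hIh]
    exact integral_mono hint_f hint_h hfh
  -- lower bound
  set a : ℝ := Real.pi / (4 * (t * α)) with ha
  set b : ℝ := Real.pi / (2 * (t * α)) with hb
  have hab : a < b := by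
    rw [ha, hb]
    apply div_lt_div_of_pos_left hπ (by positivity)
    nlinarith
  have hb1 : b ≤ 1 := by
    rw [hb, div_le_one (by positivity)]
    nlinarith
  have hc : ∀ ξ ∈ Set.Ioc a b,
      Real.exp (-2 * β) * t ^ 2 / Real.pi ^ 2 ≤ f ξ := by
    intro ξ hξ
    obtain ⟨hξa, hξb⟩ := hξ
    have hξ0 : 0 < ξ := lt_trans (by positivity) hξa
    have hx1 : Real.pi / 4 < t * α * ξ := by
      rw [ha, div_lt_iff₀ (by positivity)] at hξa
      nlinarith
    have hx2 : t * α * ξ ≤ Real.pi / 2 := by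
      rw [hb, le_div_iff₀ (by positivity)] at hξb
      nlinarith
    have hsin : 1 / 2 ≤ Real.sin (t * α * ξ) := by
      have h0 := Real.mul_le_sin (x := t * α * ξ) (by nlinarith) hx2
      have h1 : 2 / Real.pi * (Real.pi / 4) < 2 / Real.pi * (t * α * ξ) :=
        mul_lt_mul_of_pos_left hx1 (by positivity)
      have h2 : 2 / Real.pi * (Real.pi / 4) = 1 / 2 := by field_simp; ring
      linarith
    have hsinsq : 1 / 4 ≤ Real.sin (t * α * ξ) ^ 2 := by nlinarith
    have hξle : ξ ≤ 1 := le_trans hξb hb1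
    have hξsq : ξ ^ 2 ≤ 1 := by nlinarith
    have hexp : Real.exp (-2 * β) ≤ Real.exp (-2 * β * ξ ^ 2) := by
      apply Real.exp_le_exp.2
      nlinarith [mul_nonneg hβ.le (sub_nonneg.2 hξsq)]
    have hden : α ^ 2 * ξ ^ 2 ≤ Real.pi ^ 2 / (4 * t ^ 2) := by
      have hxx : (t * α * ξ) * (t * α * ξ) ≤ (Real.pi / 2) * (Real.pi / 2) :=
        mul_le_mul hx2 hx2 (by positivity) (by positivity)
      rw [le_div_iff₀ (by positivity)]
      nlinarith [hxx]
    have hden0 : 0 < α ^ 2 * ξ ^ 2 := by positivity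
    simp only [hf]
    rw [div_le_div_iff₀ (by positivity) hden0]
    have h1 : Real.exp (-2 * β) * t ^ 2 * (α ^ 2 * ξ ^ 2)
        ≤ Real.exp (-2 * β) * t ^ 2 * (Real.pi ^ 2 / (4 * t ^ 2)) := by
      apply mul_le_mul_of_nonneg_left hden (by positivity)
    have h2 : Real.exp (-2 * β) * t ^ 2 * (Real.pi ^ 2 / (4 * t ^ 2))
        = Real.exp (-2 * β) * (1 / 4) * Real.pi ^ 2 := by
      field_simp
    have h3 : Real.exp (-2 * β) * (1 / 4) * Real.pi ^ 2
        ≤ Real.exp (-2 * β * ξ ^ 2) * Real.sin (t * α * ξ) ^ 2 * Real.pi ^ 2 := by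
      have : Real.exp (-2 * β) * (1 / 4) ≤ Real.exp (-2 * β * ξ ^ 2) * Real.sin (t * α * ξ) ^ 2 :=
        mul_le_mul hexp hsinsq (by norm_num) (Real.exp_pos _).le
      nlinarith [sq_nonneg Real.pi]
    linarith
  have hvol : (volume (Set.Ioc a b)).toReal = Real.pi / (4 * (t * α)) := by
    rw [Real.volume_Ioc, ENNReal.toReal_ofReal (by linarith)]
    rw [ha, hb]
    field_simp
    ring
  have hlower : Real.exp (-2 * β) * t / (4 * Real.pi * α) ≤ ∫ ξ : ℝ, f ξ := by
    have h1 : Real.exp (-2 * β) * t ^ 2 / Real.pi ^ 2 * (volume (Set.Ioc a b)).toReal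
        ≤ ∫ ξ in Set.Ioc a b, f ξ := by
      have := setIntegral_ge_of_const_le_real measurableSet_Ioc (by simp [Real.volume_Ioc]) hc
        hint_f.integrableOn
      simpa [Measure.real, smul_eq_mul, mul_comm] using this
    have h2 : (∫ ξ in Set.Ioc a b, f ξ) ≤ ∫ ξ : ℝ, f ξ :=
      setIntegral_le_integral hint_f (Filter.Eventually.of_forall hfnonneg)
    have h3 : Real.exp (-2 * β) * t / (4 * Real.pi * α)
        ≤ Real.exp (-2 * β) * t ^ 2 / Real.pi ^ 2 * (volume (Set.Ioc a b)).toReal := by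
      rw [hvol]
      rw [div_mul_div_comm, div_le_div_iff₀ (by positivity) (by positivity)]
      ring_nf
      nlinarith [Real.exp_pos (-2 * β), sq_nonneg Real.pi]
    linarith
  constructor
  · -- lower sqrt bound
    rw [Real.le_sqrt (by positivity) (integral_nonneg hfnonneg)]
    have key : (1 / (2 * Real.sqrt (Real.pi * α)) * Real.exp (-β) * Real.sqrt t) ^ 2
        = Real.exp (-2 * β) * t / (4 * Real.pi * α) := by
      have h1 : Real.sqrt (Real.pi * α) ^ 2 = Real.pi * α := Real.sq_sqrt (by positivity)
      have h2 : Real.sqrt t ^ 2 = t := Real.sq_sqrt ht0.le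
      have h3 : Real.exp (-β) ^ 2 = Real.exp (-2 * β) := by
        rw [← Real.exp_nat_mul]; norm_num
      have h0 : (1 / (2 * Real.sqrt (Real.pi * α)) * Real.exp (-β) * Real.sqrt t) ^ 2
          = (1 / (2 * Real.sqrt (Real.pi * α))) ^ 2 * Real.exp (-β) ^ 2 * Real.sqrt t ^ 2 := by
        ring
      have h4 : (1 / (2 * Real.sqrt (Real.pi * α))) ^ 2 = 1 / (4 * (Real.pi * α)) := by
        rw [div_pow, mul_pow, h1]; norm_num
      rw [h0, h4, h2, h3]
      have hπα : Real.pi * α ≠ 0 := by positivity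
      field_simp
    rw [key]
    exact hlower
  · -- upper sqrt bound
    have h1 : Real.sqrt (∫ ξ : ℝ, f ξ) ≤ Real.sqrt (2 * Real.pi * t / α) :=
      Real.sqrt_le_sqrt hupper
    have h2 : Real.sqrt (2 * Real.pi * t / α)
        = Real.sqrt (2 * Real.pi / α) * Real.sqrt t := by
      rw [← Real.sqrt_mul (by positivity)]
      ring_nf
    rw [h2] at h1
    exact h1
end

section
/- Let α > 0, β > 0 and t ≥ 2. Then ∫_{t^{-1/2}}^{1} e^{-2βr²} sin²(tαr) r^{-1} dr ≥ C e^{-2β} ( log(t+2) − t^{-1/2} − C' ) for constants C, C' > 0 depending only on α. -/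
open MeasureTheory Real intervalIntegral

lemma abs_integral_cos_div_le (c a : ℝ) (hc : 0 < c) (ha : 0 < a) (ha1 : a ≤ 1) :
    |∫ r in a..1, Real.cos (c * r) / r| ≤ 3 / (c * a ^ 2) := by
  have hsub : Set.uIcc a 1 ⊆ {x : ℝ | x ≠ 0} := by
    rw [Set.uIcc_of_le ha1]
    intro x hx
    exact ne_of_gt (lt_of_lt_of_le ha hx.1)
  have hcg : ContinuousOn (fun r : ℝ => Real.cos (c * r) / r) (Set.uIcc a 1) := by
    apply ContinuousOn.div
    · exact (Real.continuous_cos.comp (continuous_const.mul continuous_id)).continuousOn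
    · exact continuousOn_id
    · intro x hx; exact hsub hx
  have hch : ContinuousOn (fun r : ℝ => Real.sin (c * r) / (c * r ^ 2)) (Set.uIcc a 1) := by
    apply ContinuousOn.div
    · exact (Real.continuous_sin.comp (continuous_const.mul continuous_id)).continuousOn
    · exact (continuous_const.mul (continuous_pow 2)).continuousOn
    · intro x hx
      have hx0 := hsub hx
      exact mul_ne_zero (ne_of_gt hc) (pow_ne_zero 2 hx0)
  have hig : IntervalIntegrable (fun r : ℝ => Real.cos (c * r) / r) volume a 1 :=
    hcg.intervalIntegrable
  have hih : IntervalIntegrable (fun r : ℝ => Real.sin (c * r) / (c * r ^ 2)) volume a 1 :=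
    hch.intervalIntegrable
  set F : ℝ → ℝ := fun r => Real.sin (c * r) / (c * r) with hF
  have hderiv : ∀ r ∈ Set.uIcc a 1, HasDerivAt F
      (Real.cos (c * r) / r - Real.sin (c * r) / (c * r ^ 2)) r := by
    intro r hr
    have hr0 : r ≠ 0 := hsub hr
    have h1 : HasDerivAt (fun x : ℝ => Real.sin (c * x)) (Real.cos (c * r) * c) r := by
      have := (Real.hasDerivAt_sin (c * r)).comp r
        (by simpa using (hasDerivAt_id r).const_mul c)
      exact this
    have h2 : HasDerivAt (fun x : ℝ => c * x) c r := by
      simpa using (hasDerivAt_id r).const_mul c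
    have : HasDerivAt F ((Real.cos (c * r) * c * (c * r) - Real.sin (c * r) * c) / (c * r) ^ 2) r :=
      h1.div h2 (by positivity)
    convert this using 1
    field_simp
  have heq : (∫ r in a..1, (Real.cos (c * r) / r - Real.sin (c * r) / (c * r ^ 2)))
      = F 1 - F a :=
    intervalIntegral.integral_eq_sub_of_hasDerivAt hderiv (hig.sub hih)
  have hsplit : (∫ r in a..1, Real.cos (c * r) / r)
      = (F 1 - F a) + ∫ r in a..1, Real.sin (c * r) / (c * r ^ 2) := by
    rw [← heq, intervalIntegral.integral_sub hig hih]
    ring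
  have ha2 : a ^ 2 ≤ 1 := by nlinarith
  have hF1 : |F 1| ≤ 1 / (c * a ^ 2) := by
    rw [hF]
    simp only [mul_one]
    rw [abs_div, abs_of_pos hc]
    exact div_le_div₀ zero_le_one (Real.abs_sin_le_one c) (by positivity) (by nlinarith)
  have hFa : |F a| ≤ 1 / (c * a ^ 2) := by
    rw [hF, abs_div, abs_of_pos (show (0:ℝ) < c * a by positivity)]
    exact div_le_div₀ zero_le_one (Real.abs_sin_le_one _) (by positivity) (mul_le_mul_of_nonneg_left (by nlinarith) hc.le)
  have hInt : |∫ r in a..1, Real.sin (c * r) / (c * r ^ 2)| ≤ 1 / (c * a ^ 2) := by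
    have hb : ∀ x ∈ Set.uIoc a 1, ‖Real.sin (c * x) / (c * x ^ 2)‖ ≤ 1 / (c * a ^ 2) := by
      intro x hx
      rw [Set.uIoc_of_le ha1] at hx
      have hxa : a < x := hx.1
      have hx0 : 0 < x := ha.trans hxa
      rw [Real.norm_eq_abs, abs_div, abs_of_pos (show (0:ℝ) < c * x ^ 2 by positivity)]
      have h1 : |Real.sin (c * x)| ≤ 1 := Real.abs_sin_le_one _
      have h2 : c * a ^ 2 ≤ c * x ^ 2 := mul_le_mul_of_nonneg_left (by nlinarith) hc.le
      exact div_le_div₀ zero_le_one h1 (by positivity) h2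
    have := intervalIntegral.norm_integral_le_of_norm_le_const hb
    rw [Real.norm_eq_abs] at this
    have h2 : |1 - a| ≤ 1 := by rw [abs_of_nonneg (by linarith)]; linarith
    calc |∫ r in a..1, Real.sin (c * r) / (c * r ^ 2)| ≤ 1 / (c * a ^ 2) * |1 - a| := this
      _ ≤ 1 / (c * a ^ 2) * 1 := by
          apply mul_le_mul_of_nonneg_left h2 (by positivity)
      _ = 1 / (c * a ^ 2) := mul_one _
  calc |∫ r in a..1, Real.cos (c * r) / r|
      = |(F 1 - F a) + ∫ r in a..1, Real.sin (c * r) / (c * r ^ 2)| := by rw [hsplit]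
    _ ≤ |F 1 - F a| + |∫ r in a..1, Real.sin (c * r) / (c * r ^ 2)| := abs_add_le _ _
    _ ≤ (|F 1| + |F a|) + |∫ r in a..1, Real.sin (c * r) / (c * r ^ 2)| := by
        gcongr; exact abs_sub _ _
    _ ≤ (1 / (c * a ^ 2) + 1 / (c * a ^ 2)) + 1 / (c * a ^ 2) := by gcongr
    _ = 3 / (c * a ^ 2) := by ring

/-- Logarithmic lower bound:
`∫_{t^{-1/2}}^1 e^{-2βr²} sin²(tαr)/r dr ≥ C e^{-2β} (log(t+2) − t^{-1/2} − C')`. -/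
theorem integral_exp_sin_sq_div_ge (α : ℝ) (hα : 0 < α) :
    ∃ C C' : ℝ, 0 < C ∧ 0 < C' ∧ ∀ β : ℝ, 0 < β → ∀ t : ℝ, 2 ≤ t →
      (∫ r in t ^ (-(1 : ℝ) / 2)..1,
          Real.exp (-2 * β * r ^ 2) * Real.sin (t * α * r) ^ 2 / r) ≥
        C * Real.exp (-2 * β) * (Real.log (t + 2) - t ^ (-(1 : ℝ) / 2) - C') := by
  refine ⟨1/4, 1 + 3/α, by norm_num, by positivity, ?_⟩
  intro β hβ t ht
  have ht0 : (0:ℝ) < t := by linarith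
  set a : ℝ := t ^ (-(1:ℝ)/2) with ha_def
  have ha0 : 0 < a := Real.rpow_pos_of_pos ht0 _
  have ha1 : a ≤ 1 := Real.rpow_le_one_of_one_le_of_nonpos (by linarith) (by norm_num)
  have ha2 : a ^ 2 = t⁻¹ := by
    rw [ha_def, ← Real.rpow_natCast (t ^ (-(1:ℝ)/2)) 2, ← Real.rpow_mul ht0.le]
    norm_num
    rw [show (-1 : ℝ) = ((-1 : ℤ) : ℝ) by norm_num, Real.rpow_intCast, zpow_neg_one]
  set c : ℝ := 2 * t * α with hc_def
  have hc : 0 < c := by positivity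
  set L : ℝ := ∫ r in a..1, Real.cos (c * r) / r with hL_def
  have hsub : Set.uIcc a 1 ⊆ {x : ℝ | x ≠ 0} := by
    rw [Set.uIcc_of_le ha1]
    intro x hx
    exact ne_of_gt (lt_of_lt_of_le ha0 hx.1)
  -- integrabilities
  have hint1 : IntervalIntegrable (fun r : ℝ => 1 / r) volume a 1 := by
    apply ContinuousOn.intervalIntegrable
    exact ContinuousOn.div continuousOn_const continuousOn_id (fun x hx => hsub hx)
  have hintcos : IntervalIntegrable (fun r : ℝ => Real.cos (c * r) / r) volume a 1 := by
    apply ContinuousOn.intervalIntegrable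
    exact ContinuousOn.div
      ((Real.continuous_cos.comp (continuous_const.mul continuous_id)).continuousOn)
      continuousOn_id (fun x hx => hsub hx)
  have hintsin : IntervalIntegrable (fun r : ℝ => Real.sin (t * α * r) ^ 2 / r) volume a 1 := by
    apply ContinuousOn.intervalIntegrable
    exact ContinuousOn.div
      (((Real.continuous_sin.comp (continuous_const.mul continuous_id)).pow 2).continuousOn)
      continuousOn_id (fun x hx => hsub hx)
  have hintf : IntervalIntegrable
      (fun r : ℝ => Real.exp (-2 * β * r ^ 2) * Real.sin (t * α * r) ^ 2 / r) volume a 1 := by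
    apply ContinuousOn.intervalIntegrable
    exact ContinuousOn.div
      ((Real.continuous_exp.comp (by continuity)).mul
        ((Real.continuous_sin.comp (continuous_const.mul continuous_id)).pow 2)).continuousOn
      continuousOn_id (fun x hx => hsub hx)
  -- pointwise bound: exp(-2β) ≤ exp(-2βr²) on [a,1]
  have hmono : (∫ r in a..1, Real.exp (-2 * β) * (Real.sin (t * α * r) ^ 2 / r))
      ≤ ∫ r in a..1, Real.exp (-2 * β * r ^ 2) * Real.sin (t * α * r) ^ 2 / r := by
    apply intervalIntegral.integral_mono_on ha1 (hintsin.const_mul _) hintf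
    intro x hx
    have hx0 : 0 < x := lt_of_lt_of_le ha0 hx.1
    have hx1 : x ≤ 1 := hx.2
    have hexp : Real.exp (-2 * β) ≤ Real.exp (-2 * β * x ^ 2) := by
      apply Real.exp_le_exp.mpr
      have hx2 : x ^ 2 ≤ 1 := by nlinarith
      nlinarith [mul_le_mul_of_nonneg_left hx2 hβ.le]
    rw [mul_div_assoc]
    exact mul_le_mul_of_nonneg_right hexp (div_nonneg (sq_nonneg _) hx0.le)
  -- value of ∫ 1/r
  have hone_div : (∫ r in a..1, 1 / r) = (1/2) * Real.log t := by
    rw [integral_one_div (by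
      intro h
      exact (hsub h) rfl)]
    rw [one_div, Real.log_inv, ha_def, Real.log_rpow ht0]
    ring
  -- value of ∫ sin²/r
  have hsin_eq : ∀ r : ℝ, Real.sin (t * α * r) ^ 2 / r
      = (1/2) * (1/r) - (1/2) * (Real.cos (c * r) / r) := by
    intro r
    have h2 : 2 * (t * α * r) = c * r := by rw [hc_def]; ring
    rw [Real.sin_sq_eq_half_sub, h2]
    ring
  have hI : (∫ r in a..1, Real.sin (t * α * r) ^ 2 / r) = (1/4) * Real.log t - (1/2) * L := by
    have hcongr : (∫ r in a..1, Real.sin (t * α * r) ^ 2 / r)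
        = ∫ r in a..1, ((1/2) * (1/r) - (1/2) * (Real.cos (c * r) / r)) := by
      apply intervalIntegral.integral_congr
      intro r _
      exact hsin_eq r
    rw [hcongr, intervalIntegral.integral_sub (hint1.const_mul _) (hintcos.const_mul _),
        intervalIntegral.integral_const_mul, intervalIntegral.integral_const_mul,
        hone_div, ← hL_def]
    ring
  -- bound on L
  have hL : |L| ≤ 3 / (2 * α) := by
    have h := abs_integral_cos_div_le c a hc ha0 ha1
    have hca : c * a ^ 2 = 2 * α := by
      rw [ha2, hc_def]
      field_simp
    rwa [hca] at h
  -- logarithmic estimate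
  have hlog : Real.log (t + 2) ≤ Real.log t + 1 := by
    have h1 : Real.log (t + 2) ≤ Real.log (2 * t) :=
      Real.log_le_log (by linarith) (by linarith)
    rw [Real.log_mul (by norm_num) (by positivity)] at h1
    have h2 := Real.log_two_lt_d9
    linarith
  -- key linear estimate
  have hkey : (1/4) * (Real.log (t + 2) - a - (1 + 3/α)) ≤ (1/4) * Real.log t - (1/2) * L := by
    have h3 : 2 * L ≤ 3 / α ∧ -(3 / α) ≤ 2 * L := by
      have h := abs_le.mp hL
      have heq : 3 / (2 * α) = (3 / α) / 2 := by ring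
      rw [heq] at h
      constructor <;> linarith [h.1, h.2]
    linarith [h3.1, ha0]
  have hE : (0:ℝ) < Real.exp (-2 * β) := Real.exp_pos _
  rw [ge_iff_le]
  calc (1/4) * Real.exp (-2 * β) * (Real.log (t + 2) - a - (1 + 3/α))
      = Real.exp (-2 * β) * ((1/4) * (Real.log (t + 2) - a - (1 + 3/α))) := by ring
    _ ≤ Real.exp (-2 * β) * ((1/4) * Real.log t - (1/2) * L) :=
        mul_le_mul_of_nonneg_left hkey hE.le
    _ = Real.exp (-2 * β) * (∫ r in a..1, Real.sin (t * α * r) ^ 2 / r) := by rw [hI]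
    _ = ∫ r in a..1, Real.exp (-2 * β) * (Real.sin (t * α * r) ^ 2 / r) := by
        rw [intervalIntegral.integral_const_mul]
    _ ≤ _ := hmono
end

section
/- Let α₁ > α₂ > 0, β > 0. Then for all sufficiently large t, ∫₀^∞ e^{-2βr²} ( sin(tα₁r)/α₁ − sin(tα₂r)/α₂ )² r^{-1} dr ≥ C e^{-2β} (1/α₁² + 1/α₂²) log(t+2) − C' for constants C, C' > 0 independent of t and β. -/
set_option maxHeartbeats 1000000

open MeasureTheory Real


lemma osc_bound (c s : ℝ) (hc : 0 < c) (hs : 0 < s) (hs1 : s ≤ 1) :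
    |∫ r in s..1, Real.cos (c * r) / r| ≤ 2 / (c * s) := by
  have hicc : Set.uIcc s 1 = Set.Icc s 1 := Set.uIcc_of_le hs1
  have hpos : ∀ x ∈ Set.uIcc s 1, 0 < x := by
    intro x hx; rw [hicc] at hx; exact lt_of_lt_of_le hs hx.1
  have hu : ∀ x ∈ Set.uIcc s 1, HasDerivAt (fun r : ℝ => r⁻¹) (-(x^2)⁻¹) x := by
    intro x hx
    simpa using hasDerivAt_inv (ne_of_gt (hpos x hx))
  have hv : ∀ x ∈ Set.uIcc s 1, HasDerivAt (fun r : ℝ => Real.sin (c*r)/c) (Real.cos (c*x)) x := by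
    intro x hx
    have h1 : HasDerivAt (fun r : ℝ => Real.sin (c*r)) (Real.cos (c*x) * c) x := by
      have := (Real.hasDerivAt_sin (c*x)).comp x ((hasDerivAt_id x).const_mul c)
      simpa [mul_comm, Function.comp_def] using this
    have := h1.div_const c
    simpa [mul_div_assoc, div_self (ne_of_gt hc)] using this
  have hcont1 : ContinuousOn (fun r : ℝ => -(r^2)⁻¹) (Set.uIcc s 1) := by
    refine ContinuousOn.neg (ContinuousOn.inv₀ (by fun_prop) ?_)
    intro x hx
    have := hpos x hx; positivity
  have hcont2 : ContinuousOn (fun r : ℝ => Real.cos (c*r)) (Set.uIcc s 1) := by fun_prop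
  have hparts := intervalIntegral.integral_mul_deriv_eq_deriv_mul hu hv
    (hcont1.intervalIntegrable) (hcont2.intervalIntegrable)
  have hrw : (∫ r in s..1, Real.cos (c*r) / r) = ∫ r in s..1, r⁻¹ * Real.cos (c*r) := by
    apply intervalIntegral.integral_congr
    intro x hx; simp [div_eq_mul_inv, mul_comm]
  rw [hrw, hparts]
  have h1 : |(1:ℝ)⁻¹ * (Real.sin (c*1)/c)| ≤ 1/c := by
    rw [abs_mul, abs_div, abs_of_pos hc, inv_one, abs_one, one_mul]
    gcongr
    · exact Real.abs_sin_le_one _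
  have h2 : |s⁻¹ * (Real.sin (c*s)/c)| ≤ 1/(s*c) := by
    rw [abs_mul, abs_div, abs_of_pos hc, abs_inv, abs_of_pos hs]
    calc s⁻¹ * (|Real.sin (c*s)|/c) ≤ s⁻¹ * (1/c) := by
          gcongr
          exact Real.abs_sin_le_one _
      _ = 1/(s*c) := by field_simp
  have h3 : |∫ x in s..1, (-(x^2)⁻¹) * (Real.sin (c*x)/c)| ≤ (1/s - 1) / c := by
    have hint2 : IntervalIntegrable (fun x : ℝ => (x^2)⁻¹ / c) volume s 1 := by
      apply ContinuousOn.intervalIntegrable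
      refine ContinuousOn.div_const (ContinuousOn.inv₀ (by fun_prop) ?_) c
      intro x hx; have := hpos x hx; positivity
    have hle : (∫ x in s..1, |(-(x^2)⁻¹) * (Real.sin (c*x)/c)|) ≤ ∫ x in s..1, (x^2)⁻¹ / c := by
      apply intervalIntegral.integral_mono_on hs1
      · apply ContinuousOn.intervalIntegrable
        exact (hcont1.mul (ContinuousOn.div_const (by fun_prop) c)).abs
      · exact hint2
      · intro x hx
        have hx0 : (0:ℝ) < x := lt_of_lt_of_le hs hx.1
        rw [abs_mul, abs_neg, abs_inv, abs_div, abs_of_pos hc]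
        rw [abs_of_nonneg (by positivity : (0:ℝ) ≤ x^2)]
        calc (x^2)⁻¹ * (|Real.sin (c*x)|/c) ≤ (x^2)⁻¹ * (1/c) := by
              gcongr
              exact Real.abs_sin_le_one _
          _ = (x^2)⁻¹/c := by ring
    have hval : (∫ x in s..1, (x^2)⁻¹ / c) = (1/s - 1)/c := by
      have hF : ∀ x ∈ Set.uIcc s 1, HasDerivAt (fun r : ℝ => -r⁻¹) ((x^2)⁻¹) x := by
        intro x hx
        simpa using (hasDerivAt_inv (ne_of_gt (hpos x hx))).fun_neg
      have hint3 : IntervalIntegrable (fun x : ℝ => (x^2)⁻¹) volume s 1 := by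
        apply ContinuousOn.intervalIntegrable
        refine ContinuousOn.inv₀ (by fun_prop) ?_
        intro x hx; have := hpos x hx; positivity
      have := intervalIntegral.integral_eq_sub_of_hasDerivAt hF hint3
      rw [intervalIntegral.integral_div, this]
      field_simp
      ring
    calc |∫ x in s..1, (-(x^2)⁻¹) * (Real.sin (c*x)/c)|
        ≤ ∫ x in s..1, |(-(x^2)⁻¹) * (Real.sin (c*x)/c)| :=
          intervalIntegral.abs_integral_le_integral_abs hs1
      _ ≤ (1/s - 1)/c := hval ▸ hle
  have key : 1/c + 1/(s*c) + (1/s - 1)/c = 2/(c*s) := by field_simp; ring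
  calc |(1:ℝ)⁻¹ * (Real.sin (c*1)/c) - s⁻¹ * (Real.sin (c*s)/c) - ∫ x in s..1, (-(x^2)⁻¹) * (Real.sin (c*x)/c)|
      ≤ 1/c + 1/(s*c) + (1/s - 1)/c := by
        have := abs_sub (1:ℝ) (1:ℝ)
        calc |(1:ℝ)⁻¹ * (Real.sin (c*1)/c) - s⁻¹ * (Real.sin (c*s)/c) - ∫ x in s..1, (-(x^2)⁻¹) * (Real.sin (c*x)/c)|
            ≤ |(1:ℝ)⁻¹ * (Real.sin (c*1)/c) - s⁻¹ * (Real.sin (c*s)/c)| + |∫ x in s..1, (-(x^2)⁻¹) * (Real.sin (c*x)/c)| := abs_sub _ _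
          _ ≤ (|(1:ℝ)⁻¹ * (Real.sin (c*1)/c)| + |s⁻¹ * (Real.sin (c*s)/c)|) + |∫ x in s..1, (-(x^2)⁻¹) * (Real.sin (c*x)/c)| := by
              exact add_le_add_left (abs_sub _ _) _
          _ ≤ 1/c + 1/(s*c) + (1/s - 1)/c := by
              exact add_le_add (add_le_add h1 h2) h3
    _ = 2/(c*s) := key


lemma core (α₁ α₂ t : ℝ) (h₂ : 0 < α₂) (h₁₂ : α₂ < α₁) (ht : 2 ≤ t) :
    (1/(2*α₁^2) + 1/(2*α₂^2)) * Real.log t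
      - (1/(2*α₁^2) * (1/α₁) + 1/(2*α₂^2) * (1/α₂)
         + 1/(α₁*α₂) * (2/(α₁-α₂)) + 1/(α₁*α₂) * (2/(α₁+α₂)))
    ≤ ∫ r in (1/t)..1, (Real.sin (t*α₁*r)/α₁ - Real.sin (t*α₂*r)/α₂)^2 / r := by
  have h₁ : 0 < α₁ := lt_trans h₂ h₁₂
  have ht0 : (0:ℝ) < t := lt_of_lt_of_le two_pos ht
  set s : ℝ := 1/t with hs_def
  have hs : 0 < s := by positivity
  have hs1 : s ≤ 1 := by
    rw [hs_def, div_le_one ht0]; linarith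
  have hicc : Set.uIcc s 1 = Set.Icc s 1 := Set.uIcc_of_le hs1
  have hposx : ∀ x ∈ Set.uIcc s 1, 0 < x := by
    intro x hx; rw [hicc] at hx; exact lt_of_lt_of_le hs hx.1
  -- pointwise identity
  have hpt : Set.EqOn
      (fun r : ℝ => (Real.sin (t*α₁*r)/α₁ - Real.sin (t*α₂*r)/α₂)^2 / r)
      (fun r : ℝ =>
        (1/(2*α₁^2) + 1/(2*α₂^2)) * r⁻¹
        - (1/(2*α₁^2)) * (Real.cos ((2*(t*α₁))*r)/r)
        - (1/(2*α₂^2)) * (Real.cos ((2*(t*α₂))*r)/r)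
        - (1/(α₁*α₂)) * (Real.cos ((t*α₁ - t*α₂)*r)/r)
        + (1/(α₁*α₂)) * (Real.cos ((t*α₁ + t*α₂)*r)/r))
      (Set.uIcc s 1) := by
    intro r hr
    have hr0 : r ≠ 0 := ne_of_gt (hposx r hr)
    simp only
    have e1 : (2*(t*α₁))*r = 2*(t*α₁*r) := by ring
    have e2 : (2*(t*α₂))*r = 2*(t*α₂*r) := by ring
    have e3 : (t*α₁ - t*α₂)*r = t*α₁*r - t*α₂*r := by ring
    have e4 : (t*α₁ + t*α₂)*r = t*α₁*r + t*α₂*r := by ring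
    rw [e1, e2, e3, e4]
    have c1 : Real.cos (2*(t*α₁*r)) = 1 - 2*Real.sin (t*α₁*r)^2 := by
      rw [Real.cos_two_mul', ← Real.sin_sq_add_cos_sq (t*α₁*r)]; ring
    have c2 : Real.cos (2*(t*α₂*r)) = 1 - 2*Real.sin (t*α₂*r)^2 := by
      rw [Real.cos_two_mul', ← Real.sin_sq_add_cos_sq (t*α₂*r)]; ring
    rw [c1, c2, Real.cos_sub, Real.cos_add]
    field_simp
    ring
  rw [intervalIntegral.integral_congr hpt]
  -- integrability facts
  have hIc : ∀ c : ℝ, IntervalIntegrable (fun r : ℝ => Real.cos (c*r)/r) volume s 1 := by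
    intro c
    apply ContinuousOn.intervalIntegrable
    exact ContinuousOn.div (by fun_prop) continuousOn_id (fun x hx => ne_of_gt (hposx x hx))
  have hIinv : IntervalIntegrable (fun r : ℝ => r⁻¹) volume s 1 := by
    apply ContinuousOn.intervalIntegrable
    exact ContinuousOn.inv₀ continuousOn_id (fun x hx => ne_of_gt (hposx x hx))
  have iA := hIinv.const_mul (1/(2*α₁^2) + 1/(2*α₂^2))
  have iB := (hIc (2*(t*α₁))).const_mul (1/(2*α₁^2))
  have iC := (hIc (2*(t*α₂))).const_mul (1/(2*α₂^2))
  have iD := (hIc (t*α₁ - t*α₂)).const_mul (1/(α₁*α₂))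
  have iE := (hIc (t*α₁ + t*α₂)).const_mul (1/(α₁*α₂))
  rw [intervalIntegral.integral_add (((iA.sub iB).sub iC).sub iD) iE,
      intervalIntegral.integral_sub ((iA.sub iB).sub iC) iD,
      intervalIntegral.integral_sub (iA.sub iB) iC,
      intervalIntegral.integral_sub iA iB,
      intervalIntegral.integral_const_mul, intervalIntegral.integral_const_mul,
      intervalIntegral.integral_const_mul, intervalIntegral.integral_const_mul,
      intervalIntegral.integral_const_mul]
  have hlog : (∫ r in s..1, r⁻¹) = Real.log t := by
    rw [integral_inv_of_pos hs one_pos, hs_def]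
    rw [one_div_one_div]  -- log (1 / (1/t)) = log t
  rw [hlog]
  -- oscillatory bounds
  have ht' : t ≠ 0 := ne_of_gt ht0
  have o1 := osc_bound (2*(t*α₁)) s (by positivity) hs hs1
  have o2 := osc_bound (2*(t*α₂)) s (by positivity) hs hs1
  have o3 := osc_bound (t*α₁ - t*α₂) s (by nlinarith) hs hs1
  have o4 := osc_bound (t*α₁ + t*α₂) s (by positivity) hs hs1
  rw [show (2*(t*α₁))*s = 2*α₁ by rw [hs_def]; field_simp] at o1
  rw [show (2*(t*α₂))*s = 2*α₂ by rw [hs_def]; field_simp] at o2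
  rw [show (t*α₁ - t*α₂)*s = α₁ - α₂ by rw [hs_def]; field_simp] at o3
  rw [show (t*α₁ + t*α₂)*s = α₁ + α₂ by rw [hs_def]; field_simp] at o4
  have b1 := (abs_le.mp o1).2
  have b1' := (abs_le.mp o1).1
  have b2 := (abs_le.mp o2).2
  have b3 := (abs_le.mp o3).2
  have b4' := (abs_le.mp o4).1
  have ha1 : (0:ℝ) ≤ 1/(2*α₁^2) := by positivity
  have ha2 : (0:ℝ) ≤ 1/(2*α₂^2) := by positivity
  have ha3 : (0:ℝ) ≤ 1/(α₁*α₂) := by positivity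
  have m1 := mul_le_mul_of_nonneg_left b1 ha1
  have m2 := mul_le_mul_of_nonneg_left b2 ha2
  have m3 := mul_le_mul_of_nonneg_left b3 ha3
  have m4 := mul_le_mul_of_nonneg_left b4' ha3
  have e5 : 1/(2*α₁^2) * (2/(2*α₁)) = 1/(2*α₁^2) * (1/α₁) := by
    field_simp
  have e6 : 1/(2*α₂^2) * (2/(2*α₂)) = 1/(2*α₂^2) * (1/α₂) := by
    field_simp
  rw [e5] at m1
  rw [e6] at m2
  linarith [m1, m2, m3, m4]

/-- Logarithmic lower bound for the difference of two radial sine waves: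
for `α₁ > α₂ > 0` and all sufficiently large `t`,
`∫₀^∞ e^{-2βr²} (sin(tα₁r)/α₁ − sin(tα₂r)/α₂)² r^{-1} dr
  ≥ C e^{-2β} (1/α₁² + 1/α₂²) log(t+2) − C'`,
with `C, C'` independent of `t` and `β`. -/
theorem integral_sin_diff_sq_log_lower (α₁ α₂ : ℝ) (h₂ : 0 < α₂) (h₁₂ : α₂ < α₁) :
    ∃ C C' T : ℝ, 0 < C ∧ 0 < C' ∧ ∀ β : ℝ, 0 < β → ∀ t : ℝ, T ≤ t →
      (∫ r in Set.Ioi (0 : ℝ),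
          Real.exp (-2 * β * r ^ 2) *
            (Real.sin (t * α₁ * r) / α₁ - Real.sin (t * α₂ * r) / α₂) ^ 2 / r) ≥
        C * Real.exp (-2 * β) * (1 / α₁ ^ 2 + 1 / α₂ ^ 2) * Real.log (t + 2) - C' := by
  have h₁ : 0 < α₁ := lt_trans h₂ h₁₂
  have hd : 0 < α₁ - α₂ := sub_pos.mpr h₁₂
  set K : ℝ := 1/(2*α₁^2) * (1/α₁) + 1/(2*α₂^2) * (1/α₂)
         + 1/(α₁*α₂) * (2/(α₁-α₂)) + 1/(α₁*α₂) * (2/(α₁+α₂)) with hK_def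
  have hK : 0 < K := by
    have h1 : (0:ℝ) < 1/(2*α₁^2) * (1/α₁) := by positivity
    have h2' : (0:ℝ) < 1/(2*α₂^2) * (1/α₂) := by positivity
    have h3 : (0:ℝ) < 1/(α₁*α₂) * (2/(α₁-α₂)) := by positivity
    have h4 : (0:ℝ) < 1/(α₁*α₂) * (2/(α₁+α₂)) := by positivity
    rw [hK_def]; linarith
  refine ⟨1/4, K, 2, by norm_num, hK, ?_⟩
  intro β hβ t ht
  have ht0 : (0:ℝ) < t := lt_of_lt_of_le two_pos ht
  set s : ℝ := 1/t with hs_def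
  have hs : 0 < s := by positivity
  have hs1 : s ≤ 1 := by rw [hs_def, div_le_one ht0]; linarith
  set f : ℝ → ℝ := fun r => Real.sin (t*α₁*r)/α₁ - Real.sin (t*α₂*r)/α₂ with hf_def
  set g : ℝ → ℝ := fun r => Real.exp (-2*β*r^2) * (f r)^2 / r with hg_def
  -- integrability of g on Ioi 0
  have hgcontOn : ContinuousOn g (Set.Ioi (0:ℝ)) := by
    apply ContinuousOn.div (by fun_prop) continuousOn_id
    intro x hx; exact ne_of_gt hx
  have hmeas : AEStronglyMeasurable g (volume.restrict (Set.Ioi (0:ℝ))) :=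
    hgcontOn.aestronglyMeasurable measurableSet_Ioi
  have hexpInt : Integrable (fun r : ℝ => Real.exp (-2*β*r^2)) := by
    have := integrable_exp_neg_mul_sq (show (0:ℝ) < 2*β by linarith)
    simpa [neg_mul] using this
  have hint : IntegrableOn g (Set.Ioi (0:ℝ)) := by
    apply Integrable.mono' ((hexpInt.const_mul (2*t*(1/α₁+1/α₂))).integrableOn)
      hmeas
    filter_upwards [ae_restrict_mem measurableSet_Ioi] with r hr
    have hr0 : (0:ℝ) < r := hr
    have hfr1 : |f r| ≤ 1/α₁ + 1/α₂ := by
      rw [hf_def]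
      calc |Real.sin (t*α₁*r)/α₁ - Real.sin (t*α₂*r)/α₂|
          ≤ |Real.sin (t*α₁*r)/α₁| + |Real.sin (t*α₂*r)/α₂| := abs_sub _ _
        _ ≤ 1/α₁ + 1/α₂ := by
            apply add_le_add
            · rw [abs_div, abs_of_pos h₁]
              gcongr
              exact Real.abs_sin_le_one _
            · rw [abs_div, abs_of_pos h₂]
              gcongr
              exact Real.abs_sin_le_one _
    have hfr2 : |f r| ≤ 2*t*r := by
      rw [hf_def]
      have k1 : |Real.sin (t*α₁*r)/α₁| ≤ t*r := by
        rw [abs_div, abs_of_pos h₁, div_le_iff₀ h₁]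
        calc |Real.sin (t*α₁*r)| ≤ |t*α₁*r| := Real.abs_sin_le_abs
          _ = t*r*α₁ := by rw [abs_of_nonneg (by positivity)]; ring
      have k2 : |Real.sin (t*α₂*r)/α₂| ≤ t*r := by
        rw [abs_div, abs_of_pos h₂, div_le_iff₀ h₂]
        calc |Real.sin (t*α₂*r)| ≤ |t*α₂*r| := Real.abs_sin_le_abs
          _ = t*r*α₂ := by rw [abs_of_nonneg (by positivity)]; ring
      calc |Real.sin (t*α₁*r)/α₁ - Real.sin (t*α₂*r)/α₂|
          ≤ |Real.sin (t*α₁*r)/α₁| + |Real.sin (t*α₂*r)/α₂| := abs_sub _ _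
        _ ≤ t*r + t*r := add_le_add k1 k2
        _ = 2*t*r := by ring
    have hsq : (f r)^2 ≤ (1/α₁ + 1/α₂) * (2*t*r) := by
      calc (f r)^2 = |f r| * |f r| := by rw [pow_two, ← abs_mul_abs_self]
        _ ≤ (1/α₁ + 1/α₂) * (2*t*r) :=
            mul_le_mul hfr1 hfr2 (abs_nonneg _) (by positivity)
    have hnorm : ‖g r‖ = g r := by
      rw [Real.norm_eq_abs, abs_of_nonneg]
      rw [hg_def]
      positivity
    rw [hnorm, hg_def]
    simp only
    calc Real.exp (-2*β*r^2) * (f r)^2 / r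
        ≤ Real.exp (-2*β*r^2) * ((1/α₁ + 1/α₂) * (2*t*r)) / r := by
          gcongr
      _ = 2*t*(1/α₁+1/α₂) * Real.exp (-2*β*r^2) := by
          field_simp
  -- restrict to Ioc s 1
  have hmono : (∫ r in Set.Ioc s 1, g r) ≤ ∫ r in Set.Ioi (0:ℝ), g r := by
    apply setIntegral_mono_set hint
    · filter_upwards [ae_restrict_mem measurableSet_Ioi] with r hr
      have hr0 : (0:ℝ) < r := hr
      rw [hg_def]
      positivity
    · apply HasSubset.Subset.eventuallyLE
      intro x hx
      exact lt_trans hs hx.1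
  have hioc : (∫ r in Set.Ioc s 1, g r) = ∫ r in s..1, g r :=
    (intervalIntegral.integral_of_le hs1).symm
  -- compare with constant exponential on [s,1]
  have hicc : Set.uIcc s 1 = Set.Icc s 1 := Set.uIcc_of_le hs1
  have hposx : ∀ x ∈ Set.uIcc s 1, 0 < x := by
    intro x hx; rw [hicc] at hx; exact lt_of_lt_of_le hs hx.1
  have hgInt : IntervalIntegrable g volume s 1 := by
    apply ContinuousOn.intervalIntegrable
    apply ContinuousOn.div (by fun_prop) continuousOn_id
    intro x hx; exact ne_of_gt (hposx x hx)
  have hcInt : IntervalIntegrable (fun r => Real.exp (-2*β) * (f r)^2 / r) volume s 1 := by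
    apply ContinuousOn.intervalIntegrable
    apply ContinuousOn.div (by fun_prop) continuousOn_id
    intro x hx; exact ne_of_gt (hposx x hx)
  have hcmp : (∫ r in s..1, Real.exp (-2*β) * (f r)^2 / r) ≤ ∫ r in s..1, g r := by
    apply intervalIntegral.integral_mono_on hs1 hcInt hgInt
    intro x hx
    have hx0 : 0 < x := lt_of_lt_of_le hs hx.1
    rw [hg_def]
    simp only
    have hexp : Real.exp (-2*β) ≤ Real.exp (-2*β*x^2) := by
      apply Real.exp_le_exp.mpr
      have hx2 : x^2 ≤ 1 := by nlinarith [hx.2, hx0]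
      nlinarith [mul_nonneg hβ.le (sub_nonneg.mpr hx2)]
    have h' : Real.exp (-2*β) * (f x)^2 ≤ Real.exp (-2*β*x^2) * (f x)^2 :=
      mul_le_mul_of_nonneg_right hexp (sq_nonneg _)
    exact div_le_div_of_nonneg_right h' hx0.le |>.trans_eq rfl
  have hconst : (∫ r in s..1, Real.exp (-2*β) * (f r)^2 / r)
      = Real.exp (-2*β) * ∫ r in s..1, (f r)^2 / r := by
    simp_rw [mul_div_assoc]
    rw [intervalIntegral.integral_const_mul]
  -- core bound
  have hcore := core α₁ α₂ t h₂ h₁₂ ht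
  set c0 : ℝ := 1/(2*α₁^2) + 1/(2*α₂^2) with hc0_def
  set I : ℝ := ∫ r in s..1, (f r)^2 / r with hI_def
  have hcore : c0 * Real.log t - K ≤ I := hcore
  set E : ℝ := Real.exp (-2*β) with hE_def
  have hE0 : 0 < E := Real.exp_pos _
  have hE1 : E ≤ 1 := Real.exp_le_one_iff.mpr (by linarith)
  have hlogt : 0 ≤ Real.log t := Real.log_nonneg (by linarith)
  have hlog2 : Real.log (t+2) ≤ 2 * Real.log t := by
    calc Real.log (t+2) ≤ Real.log (t^2) := Real.log_le_log (by linarith) (by nlinarith)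
      _ = 2 * Real.log t := by
          rw [show (t:ℝ)^2 = t*t by ring, Real.log_mul (ne_of_gt ht0) (ne_of_gt ht0)]; ring
  have h5 : E * (c0 * Real.log t - K) ≤ E * I :=
    mul_le_mul_of_nonneg_left hcore hE0.le
  have hEK : E * K ≤ K := by
    calc E * K ≤ 1 * K := mul_le_mul_of_nonneg_right hE1 hK.le
      _ = K := one_mul K
  have h7 : (1/4) * E * (1/α₁^2 + 1/α₂^2) * Real.log (t+2) ≤ E * (c0 * Real.log t) := by
    have hco : (0:ℝ) ≤ (1/4) * E * (1/α₁^2 + 1/α₂^2) := by positivity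
    have := mul_le_mul_of_nonneg_left hlog2 hco
    calc (1/4) * E * (1/α₁^2 + 1/α₂^2) * Real.log (t+2)
        ≤ (1/4) * E * (1/α₁^2 + 1/α₂^2) * (2 * Real.log t) := this
      _ = E * (c0 * Real.log t) := by rw [hc0_def]; ring
  -- assemble
  have hfinal : (1/4) * E * (1/α₁^2 + 1/α₂^2) * Real.log (t+2) - K ≤ E * I := by
    have step2 : E*(c0*Real.log t) - E*K = E*(c0*Real.log t - K) := by ring
    clear_value K c0 E I
    linarith [h5, hEK, h7, step2]
  calc (1/4) * Real.exp (-2*β) * (1/α₁^2 + 1/α₂^2) * Real.log (t+2) - K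
      ≤ E * I := hfinal
    _ = ∫ r in s..1, Real.exp (-2*β) * (f r)^2 / r := hconst.symm
    _ ≤ ∫ r in s..1, g r := hcmp
    _ = ∫ r in Set.Ioc s 1, g r := hioc.symm
    _ ≤ ∫ r in Set.Ioi (0:ℝ), g r := hmono
end

section
/- Let n ≥ 2 and let P₁,…,Pₙ ∈ ℝⁿ with components Pₖ = (p_{k,1},…,p_{k,n}). Fix N ∈ {1,…,n} and define K₃ := ∫_{𝕊^{n-1}} ω_N² ( Σₖ ωₖ (ω · Pₖ) )² dω. Then for n ≥ 3, K₃ = (|𝕊^{n-1}|/(n(n+2)(n+4))) { 15 p_{N,N}² + Σ_{k≠N} (3p_{N,k}² + 3p_{k,N}² + 2p_{k,k}²) + (Σ_{k≠N} p_{k,k})² + 6 Σ_{k≠N} (p_{N,N} p_{k,k} + p_{N,k} p_{k,N}) + Σ_{k<ℓ, k≠N, ℓ≠N} (p_{k,ℓ} + p_{ℓ,k})² }. -/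
open Real MeasureTheory Metric Finset
open scoped ENNReal NNReal

noncomputable def Jm (m : ℕ) : ℝ := ∫ r in Set.Ioi (0:ℝ), r ^ m * Real.exp (-(r ^ 2) / 2)

lemma Jm_eq (m : ℕ) : Jm m
    = (1/2 : ℝ) ^ (-((m:ℝ)+1)/2) * (1/2) * Real.Gamma (((m:ℝ)+1)/2) := by
  rw [Jm, ← integral_rpow_mul_exp_neg_mul_rpow (p := 2) (q := (m:ℝ)) (b := 1/2) two_pos
    (by have := Nat.cast_nonneg (α := ℝ) m; linarith) one_half_pos]
  refine setIntegral_congr_fun measurableSet_Ioi (fun x hx => ?_)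
  rw [Real.rpow_natCast, show (2:ℝ) = ((2:ℕ):ℝ) by norm_num, Real.rpow_natCast]
  ring_nf

lemma Jm_pos (m : ℕ) : 0 < Jm m := by
  rw [Jm_eq]
  have h1 : (0:ℝ) < ((m:ℝ)+1)/2 := by positivity
  have := Real.Gamma_pos_of_pos h1
  positivity

lemma Jm_succ_succ (m : ℕ) : Jm (m + 2) = ((m:ℝ) + 1) * Jm m := by
  rw [Jm_eq, Jm_eq]
  have h1 : (((m+2:ℕ):ℝ)+1)/2 = ((m:ℝ)+1)/2 + 1 := by push_cast; ring
  rw [h1, Real.Gamma_add_one (by positivity)]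
  have h2 : (1/2:ℝ) ^ (-(((m+2:ℕ):ℝ)+1)/2) = (1/2:ℝ) ^ (-((m:ℝ)+1)/2) * 2 := by
    rw [show (-(((m+2:ℕ):ℝ)+1)/2) = (-((m:ℝ)+1)/2) + (-1) by push_cast; ring,
      Real.rpow_add (by norm_num), Real.rpow_neg_one]
    norm_num
  rw [h2]; ring

noncomputable def Im (m : ℕ) : ℝ := ∫ x : ℝ, x ^ m * Real.exp (-(x ^ 2) / 2)

lemma Im_even {m : ℕ} (hm : Even m) : Im m = 2 * Jm m := by
  rw [Im, Jm, ← integral_comp_abs (f := fun x => x ^ m * Real.exp (-(x ^ 2) / 2))]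
  congr 1; funext x
  rw [hm.pow_abs, sq_abs]

lemma Im_odd {m : ℕ} (hm : Odd m) : Im m = 0 := by
  have key : Im m = - Im m := by
    calc Im m = ∫ x : ℝ, ((-x) ^ m * Real.exp (-((-x) ^ 2) / 2)) := by
          rw [Im]
          conv_lhs => rw [← Measure.map_neg_eq_self (volume : Measure ℝ)]
          have := MeasureTheory.integral_map_equiv (μ := (volume : Measure ℝ))
            (Homeomorph.neg ℝ).toMeasurableEquiv
            (fun x : ℝ => x ^ m * Real.exp (-(x ^ 2) / 2))
          simpa using this
      _ = ∫ x : ℝ, -(x ^ m * Real.exp (-(x ^ 2) / 2)) := by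
          congr 1; funext x; rw [hm.neg_pow, neg_sq]; ring
      _ = - Im m := by rw [integral_neg, Im]
  linarith

/-- The total surface measure `|𝕊^{n-1}|`. -/
noncomputable def sphereArea (n : ℕ) : ℝ := (sphereMeasure n Set.univ).toReal

lemma polar_deg (n : ℕ) (hn : 1 ≤ n) (d : ℕ) (f : EuclideanSpace ℝ (Fin n) → ℝ)
    (hf : ∀ (r : ℝ), 0 < r → ∀ x, f (r • x) = r ^ d * f x) :
    ∫ x : EuclideanSpace ℝ (Fin n), f x * Real.exp (-(‖x‖ ^ 2) / 2)
      = (∫ ω : sphere (0 : EuclideanSpace ℝ (Fin n)) 1, f ω ∂(sphereMeasure n))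
        * Jm (d + (n - 1)) := by
  have hfr : Module.finrank ℝ (EuclideanSpace ℝ (Fin n)) = n := finrank_euclideanSpace_fin
  haveI : Nontrivial (EuclideanSpace ℝ (Fin n)) := by
    apply Module.nontrivial_of_finrank_pos (R := ℝ)
    rw [hfr]; omega
  set g : sphere (0 : EuclideanSpace ℝ (Fin n)) 1 × Set.Ioi (0:ℝ) → ℝ :=
    fun p => f p.1 * ((p.2 : ℝ) ^ d * Real.exp (-((p.2:ℝ) ^ 2) / 2)) with hg
  calc
    ∫ x : EuclideanSpace ℝ (Fin n), f x * Real.exp (-(‖x‖ ^ 2) / 2)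
      = ∫ x : ({(0:EuclideanSpace ℝ (Fin n))}ᶜ : Set (EuclideanSpace ℝ (Fin n))),
          f x.1 * Real.exp (-(‖x.1‖ ^ 2) / 2)
          ∂((volume : Measure (EuclideanSpace ℝ (Fin n))).comap (↑)) := by
        rw [MeasureTheory.integral_subtype_comap (measurableSet_singleton _).compl
          (fun x => f x * Real.exp (-(‖x‖ ^ 2) / 2)), MeasureTheory.restrict_compl_singleton]
    _ = ∫ x : ({(0:EuclideanSpace ℝ (Fin n))}ᶜ : Set (EuclideanSpace ℝ (Fin n))),
          g (homeomorphUnitSphereProd (EuclideanSpace ℝ (Fin n)) x)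
          ∂((volume : Measure (EuclideanSpace ℝ (Fin n))).comap (↑)) := by
        refine integral_congr_ae (Filter.Eventually.of_forall (fun x => ?_))
        have hx : x.1 ≠ 0 := x.2
        have hnorm : (0:ℝ) < ‖x.1‖ := norm_pos_iff.2 hx
        simp only [hg, homeomorphUnitSphereProd_apply_fst_coe,
          homeomorphUnitSphereProd_apply_snd_coe]
        have : f x.1 = ‖x.1‖ ^ d * f (‖x.1‖⁻¹ • x.1) := by
          conv_lhs => rw [← smul_inv_smul₀ (ne_of_gt hnorm) x.1]
          rw [hf _ hnorm]
        rw [this]; ring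
    _ = ∫ p : sphere (0 : EuclideanSpace ℝ (Fin n)) 1 × Set.Ioi (0:ℝ), g p
          ∂(((volume : Measure (EuclideanSpace ℝ (Fin n)))).toSphere.prod
            (Measure.volumeIoiPow (Module.finrank ℝ (EuclideanSpace ℝ (Fin n)) - 1))) :=
        (volume : Measure (EuclideanSpace ℝ (Fin n))).measurePreserving_homeomorphUnitSphereProd.integral_comp
          (Homeomorph.measurableEmbedding _) g
    _ = (∫ ω : sphere (0 : EuclideanSpace ℝ (Fin n)) 1, f ω
          ∂(volume : Measure (EuclideanSpace ℝ (Fin n))).toSphere)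
          * ∫ r : Set.Ioi (0:ℝ), ((r:ℝ) ^ d * Real.exp (-((r:ℝ) ^ 2) / 2))
              ∂(Measure.volumeIoiPow (Module.finrank ℝ (EuclideanSpace ℝ (Fin n)) - 1)) :=
        MeasureTheory.integral_prod_mul
          (f := fun ω : sphere (0 : EuclideanSpace ℝ (Fin n)) 1 => f ω)
          (g := fun r : Set.Ioi (0:ℝ) => ((r:ℝ) ^ d * Real.exp (-((r:ℝ) ^ 2) / 2)))
    _ = (∫ ω : sphere (0 : EuclideanSpace ℝ (Fin n)) 1, f ω ∂(sphereMeasure n))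
          * Jm (d + (n - 1)) := by
        rw [hfr]
        congr 1
        rw [Measure.volumeIoiPow]
        rw [show (fun r : Set.Ioi (0:ℝ) => ENNReal.ofReal ((r:ℝ) ^ (n-1)))
          = (fun r : Set.Ioi (0:ℝ) => ((Real.toNNReal ((r:ℝ) ^ (n-1))) : ℝ≥0∞)) from rfl,
          integral_withDensity_eq_integral_smul
          ((measurable_subtype_coe.pow_const _).real_toNNReal) _,
          MeasureTheory.integral_subtype_comap measurableSet_Ioi
            (fun a : ℝ => Real.toNNReal (a ^ (n-1)) • (a ^ d * Real.exp (-(a ^ 2) / 2)))]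
        rw [Jm]
        refine setIntegral_congr_fun measurableSet_Ioi (fun x hx => ?_)
        rw [NNReal.smul_def, Real.coe_toNNReal _ (pow_nonneg (le_of_lt hx) _)]
        simp only [smul_eq_mul]
        rw [pow_add]
        ring

lemma norm_sq_euclidean (n : ℕ) (x : EuclideanSpace ℝ (Fin n)) :
    ‖x‖ ^ 2 = ∑ t, (x t) ^ 2 := by
  rw [EuclideanSpace.norm_eq, Real.sq_sqrt (by positivity)]
  simp [sq_abs]

lemma gauss_prod (n : ℕ) (m : Fin n → ℕ) :
    ∫ x : EuclideanSpace ℝ (Fin n), (∏ t, (x t) ^ (m t)) * Real.exp (-(‖x‖ ^ 2) / 2)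
      = ∏ t, Im (m t) := by
  have h := (EuclideanSpace.volume_preserving_symm_measurableEquiv_toLp (Fin n)).integral_comp
    (MeasurableEquiv.toLp 2 (Fin n → ℝ)).symm.measurableEmbedding
    (fun y : Fin n → ℝ => (∏ t, (y t) ^ (m t)) * Real.exp (-(∑ t, (y t) ^ 2) / 2))
  rw [show ∫ x : EuclideanSpace ℝ (Fin n), (∏ t, (x t) ^ (m t)) * Real.exp (-(‖x‖ ^ 2) / 2)
      = ∫ x : EuclideanSpace ℝ (Fin n),
        (fun y : Fin n → ℝ => (∏ t, (y t) ^ (m t)) * Real.exp (-(∑ t, (y t) ^ 2) / 2))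
          ((MeasurableEquiv.toLp 2 (Fin n → ℝ)).symm x) from by
      refine integral_congr_ae (Filter.Eventually.of_forall (fun x => ?_))
      beta_reduce
      rw [norm_sq_euclidean]
      rfl, h]
  rw [show (fun y : Fin n → ℝ => (∏ t, (y t) ^ (m t)) * Real.exp (-(∑ t, (y t) ^ 2) / 2))
      = (fun y : Fin n → ℝ => ∏ t, ((y t) ^ (m t) * Real.exp (-((y t) ^ 2) / 2))) from by
      funext y
      rw [Finset.prod_mul_distrib, ← Real.exp_sum]
      congr 2
      rw [← Finset.sum_neg_distrib, ← Finset.sum_div]]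
  exact MeasureTheory.integral_fintype_prod_eq_prod (ι := Fin n)
    (f := fun t (v : ℝ) => v ^ (m t) * Real.exp (-(v ^ 2) / 2))

noncomputable def g6 (m : ℕ) : ℝ :=
  if m = 0 then 1 else if m = 2 then 1 else if m = 4 then 3 else if m = 6 then 15 else 0

lemma Im_eq_g6 {m : ℕ} (hm : m ≤ 6) : Im m = g6 m * Im 0 := by
  have e2 : Jm 2 = Jm 0 := by
    rw [show (2:ℕ) = 0 + 2 from rfl, Jm_succ_succ]; norm_num
  have e4 : Jm 4 = 3 * Jm 0 := by
    rw [show (4:ℕ) = 2 + 2 from rfl, Jm_succ_succ, e2]; norm_num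
  have e6 : Jm 6 = 15 * Jm 0 := by
    rw [show (6:ℕ) = 4 + 2 from rfl, Jm_succ_succ, e4]; push_cast; ring
  interval_cases m
  · simp [g6]
  · rw [Im_odd (by decide)]; simp [g6]
  · rw [Im_even (by decide), Im_even (by decide), e2]; simp [g6]
  · rw [Im_odd (by decide)]; simp [g6]
  · rw [Im_even (by decide), Im_even (by decide), e4]; simp [g6]; ring
  · rw [Im_odd (by decide)]; simp [g6]
  · rw [Im_even (by decide), Im_even (by decide), e6]; simp [g6]; ring

lemma sphere_area_eq (n : ℕ) (hn : 1 ≤ n) :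
    Im 0 ^ n = sphereArea n * Jm (n - 1) := by
  have h0 := polar_deg n hn 0 (fun _ => 1) (by intro r hr x; simp)
  have hg := gauss_prod n (fun _ => 0)
  simp only [pow_zero, Finset.prod_const_one, one_mul] at h0 hg
  rw [hg] at h0
  rw [MeasureTheory.integral_const] at h0
  simp only [smul_eq_mul, mul_one, zero_add] at h0
  rw [Finset.prod_const, Finset.card_univ, Fintype.card_fin] at h0
  rw [h0, sphereArea]
  rfl

lemma sphere_moment (n : ℕ) (hn : 3 ≤ n) (m : Fin n → ℕ) (hm : ∑ t, m t = 6) :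
    (∫ ω : sphere (0 : EuclideanSpace ℝ (Fin n)) 1,
        ∏ t, ((ω : EuclideanSpace ℝ (Fin n)) t) ^ (m t) ∂(sphereMeasure n))
      = sphereArea n / ((n:ℝ) * ((n:ℝ)+2) * ((n:ℝ)+4)) * ∏ t, g6 (m t) := by
  have hmt : ∀ t, m t ≤ 6 := by
    intro t
    rw [← hm]
    exact Finset.single_le_sum (fun i _ => Nat.zero_le _) (Finset.mem_univ t)
  have hhom : ∀ (r : ℝ), 0 < r → ∀ x : EuclideanSpace ℝ (Fin n),
      (∏ t, ((r • x) t) ^ (m t)) = r ^ 6 * ∏ t, (x t) ^ (m t) := by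
    intro r hr x
    have hc : ∀ t, (r • x) t = r * x t := fun t => rfl
    simp only [hc, mul_pow]
    rw [Finset.prod_mul_distrib, Finset.prod_pow_eq_pow_sum, hm]
  have h1 := polar_deg n (by omega) 6 (fun x => ∏ t, (x t) ^ (m t)) hhom
  rw [gauss_prod n m] at h1
  have h0 := sphere_area_eq n (by omega)
  set k : ℕ := n - 1 with hk
  have hkn : (k:ℝ) = (n:ℝ) - 1 := by
    rw [hk, Nat.cast_sub (by omega)]; simp
  have hJ : Jm (6 + k) = ((n:ℝ) * ((n:ℝ)+2) * ((n:ℝ)+4)) * Jm k := by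
    rw [show 6 + k = k + 2 + 2 + 2 from by omega, Jm_succ_succ, Jm_succ_succ, Jm_succ_succ]
    push_cast
    rw [hkn]
    ring
  have hprod : ∏ t, Im (m t) = (∏ t, g6 (m t)) * Im 0 ^ n := by
    calc ∏ t, Im (m t) = ∏ t, (g6 (m t) * Im 0) :=
          Finset.prod_congr rfl (fun t _ => Im_eq_g6 (hmt t))
      _ = (∏ t, g6 (m t)) * Im 0 ^ n := by
          rw [Finset.prod_mul_distrib, Finset.prod_const, Finset.card_univ, Fintype.card_fin]
  rw [hprod, h0, hJ] at h1
  have hn0 : (0:ℝ) < (n:ℝ) := by exact_mod_cast (by omega : 0 < n)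
  have hC : (0:ℝ) < (n:ℝ) * ((n:ℝ)+2) * ((n:ℝ)+4) := by positivity
  have hJk := Jm_pos k
  have h2 : (∫ ω : sphere (0 : EuclideanSpace ℝ (Fin n)) 1,
        ∏ t, ((ω : EuclideanSpace ℝ (Fin n)) t) ^ (m t) ∂(sphereMeasure n))
      * ((n:ℝ) * ((n:ℝ)+2) * ((n:ℝ)+4)) = (∏ t, g6 (m t)) * sphereArea n := by
    apply mul_right_cancel₀ (ne_of_gt hJk)
    rw [mul_assoc, mul_assoc]
    linear_combination -h1
  rw [div_mul_eq_mul_div, eq_div_iff (ne_of_gt hC)]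
  linear_combination h2


variable {n : ℕ}

def mfun (N k i l j : Fin n) : Fin n → ℕ := fun t =>
  (if t = N then 2 else 0) + ((if t = k then 1 else 0) + (if t = i then 1 else 0)
    + ((if t = l then 1 else 0) + (if t = j then 1 else 0)))

noncomputable def dl (a b : Fin n) : ℝ := if a = b then 1 else 0

noncomputable def D (N k i l j : Fin n) : ℝ :=
  dl k i * dl l j + dl k l * dl i j + dl k j * dl i l
    + 2 * (dl N k * dl N i * dl l j + dl N k * dl N l * dl i j + dl N k * dl N j * dl i l
      + dl N i * dl N l * dl k j + dl N i * dl N j * dl k l + dl N l * dl N j * dl k i)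

lemma prod_g6_support (f : Fin n → ℕ) (s : Finset (Fin n)) (h : ∀ t ∉ s, f t = 0) :
    ∏ t, g6 (f t) = ∏ t ∈ s, g6 (f t) :=
  (Finset.prod_subset (Finset.subset_univ s) (fun t _ ht => by rw [h t ht]; simp [g6])).symm

lemma mfun_sum (N k i l j : Fin n) : ∑ t, mfun N k i l j t = 6 := by
  simp [mfun, Finset.sum_add_distrib, Finset.sum_ite_eq' Finset.univ]

lemma prodg6_eq_D (N k i l j : Fin n) :
    ∏ t, g6 (mfun N k i l j t) = D N k i l j := by
  by_cases hkN : k = N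
  · -- hkN
    by_cases hiN : i = N
    · -- hiN
      by_cases hlN : l = N
      · -- hlN
        by_cases hjN : j = N
        · -- hjN
          have hs : ∀ t ∉ ({N} : Finset (Fin n)), mfun N k i l j t = 0 := by
            intro t ht
            simp only [Finset.mem_singleton] at ht
            simp [mfun, ht, (show k = N from by simp_all), (show i = N from by simp_all), (show l = N from by simp_all), (show j = N from by simp_all)]
          rw [prod_g6_support _ _ hs, Finset.prod_singleton]
          norm_num [mfun, D, dl, g6, (show k = N from by simp_all), (show i = N from by simp_all), (show l = N from by simp_all), (show j = N from by simp_all)]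
        · -- ¬hjN
          rw [Finset.prod_eq_zero (Finset.mem_univ N) (by norm_num [mfun, g6, (show k = N from by simp_all), (show i = N from by simp_all), (show l = N from by simp_all), (show ¬ N = j from fun hcontra => by simp_all)])]
          simp [D, dl, (show k = N from by simp_all), (show i = N from by simp_all), (show l = N from by simp_all), (show ¬ N = j from fun hcontra => by simp_all), (show ¬ j = N from fun hcontra => by simp_all)]
      · -- ¬hlN
        by_cases hjN : j = N
        · -- hjN
          rw [Finset.prod_eq_zero (Finset.mem_univ N) (by norm_num [mfun, g6, (show k = N from by simp_all), (show i = N from by simp_all), (show ¬ N = l from fun hcontra => by simp_all), (show j = N from by simp_all)])]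
          simp [D, dl, (show k = N from by simp_all), (show i = N from by simp_all), (show j = N from by simp_all), (show ¬ N = l from fun hcontra => by simp_all), (show ¬ l = N from fun hcontra => by simp_all)]
        · -- ¬hjN
          by_cases hlj : l = j
          · -- hlj
            have hs : ∀ t ∉ ({N, l} : Finset (Fin n)), mfun N k i l j t = 0 := by
              intro t ht
              simp only [Finset.mem_insert, Finset.mem_singleton, not_or] at ht
              simp [mfun, ht.1, ht.2, (show k = N from by simp_all), (show i = N from by simp_all), (show j = l from by simp_all), (show ¬ N = l from fun hcontra => by simp_all), (show ¬ l = N from fun hcontra => by simp_all)]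
            rw [prod_g6_support _ _ hs, Finset.prod_pair (show ¬ N = l from fun hcontra => by simp_all)]
            norm_num [mfun, D, dl, g6, (show k = N from by simp_all), (show i = N from by simp_all), (show j = l from by simp_all), (show ¬ N = l from fun hcontra => by simp_all), (show ¬ l = N from fun hcontra => by simp_all)]
          · -- ¬hlj
            rw [Finset.prod_eq_zero (Finset.mem_univ l) (by norm_num [mfun, g6, (show ¬ l = N from fun hcontra => by simp_all), (show ¬ l = k from fun hcontra => by simp_all), (show ¬ l = i from fun hcontra => by simp_all), (show ¬ l = j from fun hcontra => by simp_all)])]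
            simp [D, dl, (show k = N from by simp_all), (show i = N from by simp_all), (show ¬ N = l from fun hcontra => by simp_all), (show ¬ N = j from fun hcontra => by simp_all), (show ¬ l = N from fun hcontra => by simp_all), (show ¬ l = j from fun hcontra => by simp_all), (show ¬ j = N from fun hcontra => by simp_all), (show ¬ j = l from fun hcontra => by simp_all)]
    · -- ¬hiN
      by_cases hlN : l = N
      · -- hlN
        by_cases hjN : j = N
        · -- hjN
          rw [Finset.prod_eq_zero (Finset.mem_univ N) (by norm_num [mfun, g6, (show k = N from by simp_all), (show ¬ N = i from fun hcontra => by simp_all), (show l = N from by simp_all), (show j = N from by simp_all)])]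
          simp [D, dl, (show k = N from by simp_all), (show l = N from by simp_all), (show j = N from by simp_all), (show ¬ N = i from fun hcontra => by simp_all), (show ¬ i = N from fun hcontra => by simp_all)]
        · -- ¬hjN
          by_cases hij : i = j
          · -- hij
            have hs : ∀ t ∉ ({N, i} : Finset (Fin n)), mfun N k i l j t = 0 := by
              intro t ht
              simp only [Finset.mem_insert, Finset.mem_singleton, not_or] at ht
              simp [mfun, ht.1, ht.2, (show k = N from by simp_all), (show l = N from by simp_all), (show j = i from by simp_all), (show ¬ N = i from fun hcontra => by simp_all), (show ¬ i = N from fun hcontra => by simp_all)]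
            rw [prod_g6_support _ _ hs, Finset.prod_pair (show ¬ N = i from fun hcontra => by simp_all)]
            norm_num [mfun, D, dl, g6, (show k = N from by simp_all), (show l = N from by simp_all), (show j = i from by simp_all), (show ¬ N = i from fun hcontra => by simp_all), (show ¬ i = N from fun hcontra => by simp_all)]
          · -- ¬hij
            rw [Finset.prod_eq_zero (Finset.mem_univ i) (by norm_num [mfun, g6, (show ¬ i = N from fun hcontra => by simp_all), (show ¬ i = k from fun hcontra => by simp_all), (show ¬ i = l from fun hcontra => by simp_all), (show ¬ i = j from fun hcontra => by simp_all)])]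
            simp [D, dl, (show k = N from by simp_all), (show l = N from by simp_all), (show ¬ N = i from fun hcontra => by simp_all), (show ¬ N = j from fun hcontra => by simp_all), (show ¬ i = N from fun hcontra => by simp_all), (show ¬ i = j from fun hcontra => by simp_all), (show ¬ j = N from fun hcontra => by simp_all), (show ¬ j = i from fun hcontra => by simp_all)]
      · -- ¬hlN
        by_cases hjN : j = N
        · -- hjN
          by_cases hil : i = l
          · -- hil
            have hs : ∀ t ∉ ({N, i} : Finset (Fin n)), mfun N k i l j t = 0 := by
              intro t ht
              simp only [Finset.mem_insert, Finset.mem_singleton, not_or] at ht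
              simp [mfun, ht.1, ht.2, (show k = N from by simp_all), (show l = i from by simp_all), (show j = N from by simp_all), (show ¬ N = i from fun hcontra => by simp_all), (show ¬ i = N from fun hcontra => by simp_all)]
            rw [prod_g6_support _ _ hs, Finset.prod_pair (show ¬ N = i from fun hcontra => by simp_all)]
            norm_num [mfun, D, dl, g6, (show k = N from by simp_all), (show l = i from by simp_all), (show j = N from by simp_all), (show ¬ N = i from fun hcontra => by simp_all), (show ¬ i = N from fun hcontra => by simp_all)]
          · -- ¬hil
            rw [Finset.prod_eq_zero (Finset.mem_univ i) (by norm_num [mfun, g6, (show ¬ i = N from fun hcontra => by simp_all), (show ¬ i = k from fun hcontra => by simp_all), (show ¬ i = l from fun hcontra => by simp_all), (show ¬ i = j from fun hcontra => by simp_all)])]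
            simp [D, dl, (show k = N from by simp_all), (show j = N from by simp_all), (show ¬ N = i from fun hcontra => by simp_all), (show ¬ N = l from fun hcontra => by simp_all), (show ¬ i = N from fun hcontra => by simp_all), (show ¬ i = l from fun hcontra => by simp_all), (show ¬ l = N from fun hcontra => by simp_all), (show ¬ l = i from fun hcontra => by simp_all)]
        · -- ¬hjN
          rw [Finset.prod_eq_zero (Finset.mem_univ N) (by norm_num [mfun, g6, (show k = N from by simp_all), (show ¬ N = i from fun hcontra => by simp_all), (show ¬ N = l from fun hcontra => by simp_all), (show ¬ N = j from fun hcontra => by simp_all)])]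
          simp [D, dl, (show k = N from by simp_all), (show ¬ N = i from fun hcontra => by simp_all), (show ¬ N = l from fun hcontra => by simp_all), (show ¬ N = j from fun hcontra => by simp_all), (show ¬ i = N from fun hcontra => by simp_all), (show ¬ l = N from fun hcontra => by simp_all), (show ¬ j = N from fun hcontra => by simp_all)]
  · -- ¬hkN
    by_cases hiN : i = N
    · -- hiN
      by_cases hlN : l = N
      · -- hlN
        by_cases hjN : j = N
        · -- hjN
          rw [Finset.prod_eq_zero (Finset.mem_univ N) (by norm_num [mfun, g6, (show ¬ N = k from fun hcontra => by simp_all), (show i = N from by simp_all), (show l = N from by simp_all), (show j = N from by simp_all)])]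
          simp [D, dl, (show i = N from by simp_all), (show l = N from by simp_all), (show j = N from by simp_all), (show ¬ N = k from fun hcontra => by simp_all), (show ¬ k = N from fun hcontra => by simp_all)]
        · -- ¬hjN
          by_cases hkj : k = j
          · -- hkj
            have hs : ∀ t ∉ ({N, k} : Finset (Fin n)), mfun N k i l j t = 0 := by
              intro t ht
              simp only [Finset.mem_insert, Finset.mem_singleton, not_or] at ht
              simp [mfun, ht.1, ht.2, (show i = N from by simp_all), (show l = N from by simp_all), (show j = k from by simp_all), (show ¬ N = k from fun hcontra => by simp_all), (show ¬ k = N from fun hcontra => by simp_all)]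
            rw [prod_g6_support _ _ hs, Finset.prod_pair (show ¬ N = k from fun hcontra => by simp_all)]
            norm_num [mfun, D, dl, g6, (show i = N from by simp_all), (show l = N from by simp_all), (show j = k from by simp_all), (show ¬ N = k from fun hcontra => by simp_all), (show ¬ k = N from fun hcontra => by simp_all)]
          · -- ¬hkj
            rw [Finset.prod_eq_zero (Finset.mem_univ k) (by norm_num [mfun, g6, (show ¬ k = N from fun hcontra => by simp_all), (show ¬ k = i from fun hcontra => by simp_all), (show ¬ k = l from fun hcontra => by simp_all), (show ¬ k = j from fun hcontra => by simp_all)])]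
            simp [D, dl, (show i = N from by simp_all), (show l = N from by simp_all), (show ¬ N = k from fun hcontra => by simp_all), (show ¬ N = j from fun hcontra => by simp_all), (show ¬ k = N from fun hcontra => by simp_all), (show ¬ k = j from fun hcontra => by simp_all), (show ¬ j = N from fun hcontra => by simp_all), (show ¬ j = k from fun hcontra => by simp_all)]
      · -- ¬hlN
        by_cases hjN : j = N
        · -- hjN
          by_cases hkl : k = l
          · -- hkl
            have hs : ∀ t ∉ ({N, k} : Finset (Fin n)), mfun N k i l j t = 0 := by
              intro t ht
              simp only [Finset.mem_insert, Finset.mem_singleton, not_or] at ht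
              simp [mfun, ht.1, ht.2, (show i = N from by simp_all), (show l = k from by simp_all), (show j = N from by simp_all), (show ¬ N = k from fun hcontra => by simp_all), (show ¬ k = N from fun hcontra => by simp_all)]
            rw [prod_g6_support _ _ hs, Finset.prod_pair (show ¬ N = k from fun hcontra => by simp_all)]
            norm_num [mfun, D, dl, g6, (show i = N from by simp_all), (show l = k from by simp_all), (show j = N from by simp_all), (show ¬ N = k from fun hcontra => by simp_all), (show ¬ k = N from fun hcontra => by simp_all)]
          · -- ¬hkl
            rw [Finset.prod_eq_zero (Finset.mem_univ k) (by norm_num [mfun, g6, (show ¬ k = N from fun hcontra => by simp_all), (show ¬ k = i from fun hcontra => by simp_all), (show ¬ k = l from fun hcontra => by simp_all), (show ¬ k = j from fun hcontra => by simp_all)])]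
            simp [D, dl, (show i = N from by simp_all), (show j = N from by simp_all), (show ¬ N = k from fun hcontra => by simp_all), (show ¬ N = l from fun hcontra => by simp_all), (show ¬ k = N from fun hcontra => by simp_all), (show ¬ k = l from fun hcontra => by simp_all), (show ¬ l = N from fun hcontra => by simp_all), (show ¬ l = k from fun hcontra => by simp_all)]
        · -- ¬hjN
          rw [Finset.prod_eq_zero (Finset.mem_univ N) (by norm_num [mfun, g6, (show ¬ N = k from fun hcontra => by simp_all), (show i = N from by simp_all), (show ¬ N = l from fun hcontra => by simp_all), (show ¬ N = j from fun hcontra => by simp_all)])]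
          simp [D, dl, (show i = N from by simp_all), (show ¬ N = k from fun hcontra => by simp_all), (show ¬ N = l from fun hcontra => by simp_all), (show ¬ N = j from fun hcontra => by simp_all), (show ¬ k = N from fun hcontra => by simp_all), (show ¬ l = N from fun hcontra => by simp_all), (show ¬ j = N from fun hcontra => by simp_all)]
    · -- ¬hiN
      by_cases hlN : l = N
      · -- hlN
        by_cases hjN : j = N
        · -- hjN
          by_cases hki : k = i
          · -- hki
            have hs : ∀ t ∉ ({N, k} : Finset (Fin n)), mfun N k i l j t = 0 := by
              intro t ht
              simp only [Finset.mem_insert, Finset.mem_singleton, not_or] at ht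
              simp [mfun, ht.1, ht.2, (show i = k from by simp_all), (show l = N from by simp_all), (show j = N from by simp_all), (show ¬ N = k from fun hcontra => by simp_all), (show ¬ k = N from fun hcontra => by simp_all)]
            rw [prod_g6_support _ _ hs, Finset.prod_pair (show ¬ N = k from fun hcontra => by simp_all)]
            norm_num [mfun, D, dl, g6, (show i = k from by simp_all), (show l = N from by simp_all), (show j = N from by simp_all), (show ¬ N = k from fun hcontra => by simp_all), (show ¬ k = N from fun hcontra => by simp_all)]
          · -- ¬hki
            rw [Finset.prod_eq_zero (Finset.mem_univ k) (by norm_num [mfun, g6, (show ¬ k = N from fun hcontra => by simp_all), (show ¬ k = i from fun hcontra => by simp_all), (show ¬ k = l from fun hcontra => by simp_all), (show ¬ k = j from fun hcontra => by simp_all)])]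
            simp [D, dl, (show l = N from by simp_all), (show j = N from by simp_all), (show ¬ N = k from fun hcontra => by simp_all), (show ¬ N = i from fun hcontra => by simp_all), (show ¬ k = N from fun hcontra => by simp_all), (show ¬ k = i from fun hcontra => by simp_all), (show ¬ i = N from fun hcontra => by simp_all), (show ¬ i = k from fun hcontra => by simp_all)]
        · -- ¬hjN
          rw [Finset.prod_eq_zero (Finset.mem_univ N) (by norm_num [mfun, g6, (show ¬ N = k from fun hcontra => by simp_all), (show ¬ N = i from fun hcontra => by simp_all), (show l = N from by simp_all), (show ¬ N = j from fun hcontra => by simp_all)])]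
          simp [D, dl, (show l = N from by simp_all), (show ¬ N = k from fun hcontra => by simp_all), (show ¬ N = i from fun hcontra => by simp_all), (show ¬ N = j from fun hcontra => by simp_all), (show ¬ k = N from fun hcontra => by simp_all), (show ¬ i = N from fun hcontra => by simp_all), (show ¬ j = N from fun hcontra => by simp_all)]
      · -- ¬hlN
        by_cases hjN : j = N
        · -- hjN
          rw [Finset.prod_eq_zero (Finset.mem_univ N) (by norm_num [mfun, g6, (show ¬ N = k from fun hcontra => by simp_all), (show ¬ N = i from fun hcontra => by simp_all), (show ¬ N = l from fun hcontra => by simp_all), (show j = N from by simp_all)])]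
          simp [D, dl, (show j = N from by simp_all), (show ¬ N = k from fun hcontra => by simp_all), (show ¬ N = i from fun hcontra => by simp_all), (show ¬ N = l from fun hcontra => by simp_all), (show ¬ k = N from fun hcontra => by simp_all), (show ¬ i = N from fun hcontra => by simp_all), (show ¬ l = N from fun hcontra => by simp_all)]
        · -- ¬hjN
          by_cases hki : k = i
          · -- hki
            by_cases hlj : l = j
            · -- hlj
              by_cases hkl : k = l
              · -- hkl
                have hs : ∀ t ∉ ({N, k} : Finset (Fin n)), mfun N k i l j t = 0 := by
                  intro t ht
                  simp only [Finset.mem_insert, Finset.mem_singleton, not_or] at ht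
                  simp [mfun, ht.1, ht.2, (show i = k from by simp_all), (show l = k from by simp_all), (show j = k from by simp_all), (show ¬ N = k from fun hcontra => by simp_all), (show ¬ k = N from fun hcontra => by simp_all)]
                rw [prod_g6_support _ _ hs, Finset.prod_pair (show ¬ N = k from fun hcontra => by simp_all)]
                norm_num [mfun, D, dl, g6, (show i = k from by simp_all), (show l = k from by simp_all), (show j = k from by simp_all), (show ¬ N = k from fun hcontra => by simp_all), (show ¬ k = N from fun hcontra => by simp_all)]
              · -- ¬hkl
                have hs : ∀ t ∉ ({N, k, l} : Finset (Fin n)), mfun N k i l j t = 0 := by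
                  intro t ht
                  simp only [Finset.mem_insert, Finset.mem_singleton, not_or] at ht
                  simp [mfun, ht.1, ht.2.1, ht.2.2, (show i = k from by simp_all), (show j = l from by simp_all), (show ¬ N = k from fun hcontra => by simp_all), (show ¬ N = l from fun hcontra => by simp_all), (show ¬ k = N from fun hcontra => by simp_all), (show ¬ k = l from fun hcontra => by simp_all), (show ¬ l = N from fun hcontra => by simp_all), (show ¬ l = k from fun hcontra => by simp_all)]
                rw [prod_g6_support _ _ hs, Finset.prod_insert (by simp [(show ¬ N = k from fun hcontra => by simp_all), (show ¬ N = l from fun hcontra => by simp_all)]),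
                  Finset.prod_pair (show ¬ k = l from fun hcontra => by simp_all)]
                norm_num [mfun, D, dl, g6, (show i = k from by simp_all), (show j = l from by simp_all), (show ¬ N = k from fun hcontra => by simp_all), (show ¬ N = l from fun hcontra => by simp_all), (show ¬ k = N from fun hcontra => by simp_all), (show ¬ k = l from fun hcontra => by simp_all), (show ¬ l = N from fun hcontra => by simp_all), (show ¬ l = k from fun hcontra => by simp_all)]
            · -- ¬hlj
              by_cases hlk : l = k
              · -- hlk
                rw [Finset.prod_eq_zero (Finset.mem_univ k) (by norm_num [mfun, g6, (show ¬ k = N from fun hcontra => by simp_all), (show i = k from by simp_all), (show l = k from by simp_all), (show ¬ k = j from fun hcontra => by simp_all)])]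
                simp [D, dl, (show i = k from by simp_all), (show l = k from by simp_all), (show ¬ N = k from fun hcontra => by simp_all), (show ¬ N = j from fun hcontra => by simp_all), (show ¬ k = N from fun hcontra => by simp_all), (show ¬ k = j from fun hcontra => by simp_all), (show ¬ j = N from fun hcontra => by simp_all), (show ¬ j = k from fun hcontra => by simp_all)]
              · -- ¬hlk
                rw [Finset.prod_eq_zero (Finset.mem_univ l) (by norm_num [mfun, g6, (show ¬ l = N from fun hcontra => by simp_all), (show ¬ l = k from fun hcontra => by simp_all), (show ¬ l = i from fun hcontra => by simp_all), (show ¬ l = j from fun hcontra => by simp_all)])]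
                simp [D, dl, (show i = k from by simp_all), (show ¬ N = k from fun hcontra => by simp_all), (show ¬ N = l from fun hcontra => by simp_all), (show ¬ N = j from fun hcontra => by simp_all), (show ¬ k = N from fun hcontra => by simp_all), (show ¬ k = l from fun hcontra => by simp_all), (show ¬ l = N from fun hcontra => by simp_all), (show ¬ l = k from fun hcontra => by simp_all), (show ¬ l = j from fun hcontra => by simp_all), (show ¬ j = N from fun hcontra => by simp_all), (show ¬ j = l from fun hcontra => by simp_all)]
          · -- ¬hki
            by_cases hkl : k = l
            · -- hkl
              by_cases hkj : k = j
              · -- hkj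
                rw [Finset.prod_eq_zero (Finset.mem_univ k) (by norm_num [mfun, g6, (show ¬ k = N from fun hcontra => by simp_all), (show ¬ k = i from fun hcontra => by simp_all), (show l = k from by simp_all), (show j = k from by simp_all)])]
                simp [D, dl, (show l = k from by simp_all), (show j = k from by simp_all), (show ¬ N = k from fun hcontra => by simp_all), (show ¬ N = i from fun hcontra => by simp_all), (show ¬ k = N from fun hcontra => by simp_all), (show ¬ k = i from fun hcontra => by simp_all), (show ¬ i = N from fun hcontra => by simp_all), (show ¬ i = k from fun hcontra => by simp_all)]
              · -- ¬hkj
                by_cases hij : i = j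
                · -- hij
                  have hs : ∀ t ∉ ({N, k, i} : Finset (Fin n)), mfun N k i l j t = 0 := by
                    intro t ht
                    simp only [Finset.mem_insert, Finset.mem_singleton, not_or] at ht
                    simp [mfun, ht.1, ht.2.1, ht.2.2, (show l = k from by simp_all), (show j = i from by simp_all), (show ¬ N = k from fun hcontra => by simp_all), (show ¬ N = i from fun hcontra => by simp_all), (show ¬ k = N from fun hcontra => by simp_all), (show ¬ k = i from fun hcontra => by simp_all), (show ¬ i = N from fun hcontra => by simp_all), (show ¬ i = k from fun hcontra => by simp_all)]
                  rw [prod_g6_support _ _ hs, Finset.prod_insert (by simp [(show ¬ N = k from fun hcontra => by simp_all), (show ¬ N = i from fun hcontra => by simp_all)]),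
                    Finset.prod_pair (show ¬ k = i from fun hcontra => by simp_all)]
                  norm_num [mfun, D, dl, g6, (show l = k from by simp_all), (show j = i from by simp_all), (show ¬ N = k from fun hcontra => by simp_all), (show ¬ N = i from fun hcontra => by simp_all), (show ¬ k = N from fun hcontra => by simp_all), (show ¬ k = i from fun hcontra => by simp_all), (show ¬ i = N from fun hcontra => by simp_all), (show ¬ i = k from fun hcontra => by simp_all)]
                · -- ¬hij
                  rw [Finset.prod_eq_zero (Finset.mem_univ i) (by norm_num [mfun, g6, (show ¬ i = N from fun hcontra => by simp_all), (show ¬ i = k from fun hcontra => by simp_all), (show ¬ i = l from fun hcontra => by simp_all), (show ¬ i = j from fun hcontra => by simp_all)])]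
                  simp [D, dl, (show l = k from by simp_all), (show ¬ N = k from fun hcontra => by simp_all), (show ¬ N = i from fun hcontra => by simp_all), (show ¬ N = j from fun hcontra => by simp_all), (show ¬ k = N from fun hcontra => by simp_all), (show ¬ k = i from fun hcontra => by simp_all), (show ¬ k = j from fun hcontra => by simp_all), (show ¬ i = N from fun hcontra => by simp_all), (show ¬ i = k from fun hcontra => by simp_all), (show ¬ i = j from fun hcontra => by simp_all), (show ¬ j = N from fun hcontra => by simp_all), (show ¬ j = k from fun hcontra => by simp_all), (show ¬ j = i from fun hcontra => by simp_all)]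
            · -- ¬hkl
              by_cases hkj : k = j
              · -- hkj
                by_cases hil : i = l
                · -- hil
                  have hs : ∀ t ∉ ({N, k, i} : Finset (Fin n)), mfun N k i l j t = 0 := by
                    intro t ht
                    simp only [Finset.mem_insert, Finset.mem_singleton, not_or] at ht
                    simp [mfun, ht.1, ht.2.1, ht.2.2, (show l = i from by simp_all), (show j = k from by simp_all), (show ¬ N = k from fun hcontra => by simp_all), (show ¬ N = i from fun hcontra => by simp_all), (show ¬ k = N from fun hcontra => by simp_all), (show ¬ k = i from fun hcontra => by simp_all), (show ¬ i = N from fun hcontra => by simp_all), (show ¬ i = k from fun hcontra => by simp_all)]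
                  rw [prod_g6_support _ _ hs, Finset.prod_insert (by simp [(show ¬ N = k from fun hcontra => by simp_all), (show ¬ N = i from fun hcontra => by simp_all)]),
                    Finset.prod_pair (show ¬ k = i from fun hcontra => by simp_all)]
                  norm_num [mfun, D, dl, g6, (show l = i from by simp_all), (show j = k from by simp_all), (show ¬ N = k from fun hcontra => by simp_all), (show ¬ N = i from fun hcontra => by simp_all), (show ¬ k = N from fun hcontra => by simp_all), (show ¬ k = i from fun hcontra => by simp_all), (show ¬ i = N from fun hcontra => by simp_all), (show ¬ i = k from fun hcontra => by simp_all)]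
                · -- ¬hil
                  rw [Finset.prod_eq_zero (Finset.mem_univ i) (by norm_num [mfun, g6, (show ¬ i = N from fun hcontra => by simp_all), (show ¬ i = k from fun hcontra => by simp_all), (show ¬ i = l from fun hcontra => by simp_all), (show ¬ i = j from fun hcontra => by simp_all)])]
                  simp [D, dl, (show j = k from by simp_all), (show ¬ N = k from fun hcontra => by simp_all), (show ¬ N = i from fun hcontra => by simp_all), (show ¬ N = l from fun hcontra => by simp_all), (show ¬ k = N from fun hcontra => by simp_all), (show ¬ k = i from fun hcontra => by simp_all), (show ¬ k = l from fun hcontra => by simp_all), (show ¬ i = N from fun hcontra => by simp_all), (show ¬ i = k from fun hcontra => by simp_all), (show ¬ i = l from fun hcontra => by simp_all), (show ¬ l = N from fun hcontra => by simp_all), (show ¬ l = k from fun hcontra => by simp_all), (show ¬ l = i from fun hcontra => by simp_all)]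
              · -- ¬hkj
                rw [Finset.prod_eq_zero (Finset.mem_univ k) (by norm_num [mfun, g6, (show ¬ k = N from fun hcontra => by simp_all), (show ¬ k = i from fun hcontra => by simp_all), (show ¬ k = l from fun hcontra => by simp_all), (show ¬ k = j from fun hcontra => by simp_all)])]
                simp [D, dl, (show ¬ N = k from fun hcontra => by simp_all), (show ¬ N = i from fun hcontra => by simp_all), (show ¬ N = l from fun hcontra => by simp_all), (show ¬ N = j from fun hcontra => by simp_all), (show ¬ k = N from fun hcontra => by simp_all), (show ¬ k = i from fun hcontra => by simp_all), (show ¬ k = l from fun hcontra => by simp_all), (show ¬ k = j from fun hcontra => by simp_all), (show ¬ i = N from fun hcontra => by simp_all), (show ¬ i = k from fun hcontra => by simp_all), (show ¬ l = N from fun hcontra => by simp_all), (show ¬ l = k from fun hcontra => by simp_all), (show ¬ j = N from fun hcontra => by simp_all), (show ¬ j = k from fun hcontra => by simp_all)]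



lemma sum_split (N : Fin n) (f : Fin n → ℝ) :
    ∑ k, f k = f N + ∑ k ∈ univ.filter (fun k => k ≠ N), f k := by
  rw [Finset.filter_ne', ← Finset.sum_erase_add Finset.univ f (Finset.mem_univ N), add_comm]

lemma tri_split (s : Finset (Fin n)) (k : Fin n) (hk : k ∈ s) (f : Fin n → ℝ) :
    ∑ i ∈ s, f i = f k + (∑ i ∈ s.filter (fun i => i < k), f i)
      + ∑ i ∈ s.filter (fun i => k < i), f i := by
  have e1 : s.filter (fun a => ¬ a = k ∧ a < k) = s.filter (fun a => a < k) :=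
    Finset.filter_congr (fun a _ => ⟨fun h => h.2, fun h => ⟨ne_of_lt h, h⟩⟩)
  have e2 : s.filter (fun a => ¬ a = k ∧ ¬ a < k) = s.filter (fun a => k < a) :=
    Finset.filter_congr (fun a _ =>
      ⟨fun h => lt_of_le_of_ne (not_lt.1 h.2) (Ne.symm h.1),
       fun h => ⟨(ne_of_lt h).symm, not_lt.2 (le_of_lt h)⟩⟩)
  rw [← Finset.sum_filter_add_sum_filter_not s (fun i => i = k)]
  rw [Finset.filter_eq', if_pos hk, Finset.sum_singleton]
  rw [← Finset.sum_filter_add_sum_filter_not (s.filter (fun i => ¬ i = k)) (fun i => i < k)]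
  rw [Finset.filter_filter, Finset.filter_filter, e1, e2]
  ring

lemma swap_tri (s : Finset (Fin n)) (G : Fin n → Fin n → ℝ) :
    ∑ k ∈ s, ∑ i ∈ s.filter (fun i => i < k), G k i
      = ∑ k ∈ s, ∑ i ∈ s.filter (fun i => k < i), G i k := by
  simp only [Finset.sum_filter]
  rw [Finset.sum_comm]

lemma tri_double (s : Finset (Fin n)) (F : Fin n → Fin n → ℝ) :
    ∑ k ∈ s, ∑ i ∈ s, F k i = (∑ k ∈ s, F k k)
      + ∑ k ∈ s, ∑ i ∈ s.filter (fun i => k < i), (F k i + F i k) := by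
  have h1 : ∑ k ∈ s, ∑ i ∈ s, F k i
      = ∑ k ∈ s, (F k k + ((∑ i ∈ s.filter (fun i => i < k), F k i)
          + ∑ i ∈ s.filter (fun i => k < i), F k i)) :=
    Finset.sum_congr rfl fun k hk => by rw [tri_split s k hk]; ring
  rw [h1, Finset.sum_add_distrib, Finset.sum_add_distrib, swap_tri s F,
    ← Finset.sum_add_distrib]
  congr 1
  refine Finset.sum_congr rfl fun k _ => ?_
  rw [← Finset.sum_add_distrib]
  exact Finset.sum_congr rfl fun i _ => by ring

lemma double_split (N : Fin n) (F : Fin n → Fin n → ℝ) :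
    ∑ k, ∑ i, F k i = F N N + (∑ i ∈ univ.filter (fun i => i ≠ N), F N i)
      + (∑ k ∈ univ.filter (fun k => k ≠ N), F k N)
      + ∑ k ∈ univ.filter (fun k => k ≠ N), ∑ i ∈ univ.filter (fun i => i ≠ N), F k i := by
  rw [sum_split N (fun k => ∑ i, F k i)]
  rw [sum_split N (fun i => F N i)]
  have h : ∀ k ∈ univ.filter (fun k => k ≠ N),
      (∑ i, F k i) = F k N + ∑ i ∈ univ.filter (fun i => i ≠ N), F k i :=
    fun k _ => sum_split N (F k)
  rw [Finset.sum_congr rfl h, Finset.sum_add_distrib]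
  ring

lemma split_at_N (N : Fin n) (Q : Fin n → Fin n → ℝ) :
    (∑ k, Q k k)^2 + (∑ k, ∑ i, Q k i ^ 2) + (∑ k, ∑ i, Q k i * Q i k)
      + 4 * Q N N * (∑ k, Q k k) + 4 * (∑ i, Q N i * Q i N)
      + 2 * (∑ i, Q N i ^ 2) + 2 * (∑ k, Q k N ^ 2)
    = 15 * Q N N ^ 2
      + (∑ k ∈ univ.filter (fun k => k ≠ N), (3 * Q N k ^ 2 + 3 * Q k N ^ 2 + 2 * Q k k ^ 2))
      + (∑ k ∈ univ.filter (fun k => k ≠ N), Q k k) ^ 2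
      + 6 * (∑ k ∈ univ.filter (fun k => k ≠ N), (Q N N * Q k k + Q N k * Q k N))
      + ∑ k ∈ univ.filter (fun k => k ≠ N),
          ∑ l ∈ univ.filter (fun l => k < l ∧ l ≠ N), (Q k l + Q l k) ^ 2 := by
  set s := univ.filter (fun k : Fin n => k ≠ N) with hs
  have H1 : ∑ k, Q k k = Q N N + ∑ k ∈ s, Q k k := sum_split N _
  have H2 : ∑ k, ∑ i, Q k i ^ 2 = Q N N ^ 2 + (∑ i ∈ s, Q N i ^ 2) + (∑ k ∈ s, Q k N ^ 2)
      + ∑ k ∈ s, ∑ i ∈ s, Q k i ^ 2 := double_split N _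
  have H3 : ∑ k, ∑ i, Q k i * Q i k = Q N N * Q N N + (∑ i ∈ s, Q N i * Q i N)
      + (∑ k ∈ s, Q k N * Q N k) + ∑ k ∈ s, ∑ i ∈ s, Q k i * Q i k := double_split N _
  have H3b : ∑ k ∈ s, Q k N * Q N k = ∑ k ∈ s, Q N k * Q k N :=
    Finset.sum_congr rfl fun k _ => by ring
  have H3c : ∑ i ∈ s, Q N i * Q i N = ∑ k ∈ s, Q N k * Q k N := rfl
  have H4 : ∑ i, Q N i * Q i N = Q N N * Q N N + ∑ k ∈ s, Q N k * Q k N := sum_split N _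
  have H5 : ∑ i, Q N i ^ 2 = Q N N ^ 2 + ∑ k ∈ s, Q N k ^ 2 := sum_split N _
  have H6 : ∑ k, Q k N ^ 2 = Q N N ^ 2 + ∑ k ∈ s, Q k N ^ 2 := sum_split N _
  have HS : (∑ k ∈ s, ∑ i ∈ s, Q k i ^ 2) + (∑ k ∈ s, ∑ i ∈ s, Q k i * Q i k)
      = 2 * (∑ k ∈ s, Q k k ^ 2)
        + ∑ k ∈ s, ∑ l ∈ univ.filter (fun l => k < l ∧ l ≠ N), (Q k l + Q l k) ^ 2 := by
    have h7 : (∑ k ∈ s, ∑ i ∈ s, Q k i ^ 2) + (∑ k ∈ s, ∑ i ∈ s, Q k i * Q i k)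
        = ∑ k ∈ s, ∑ i ∈ s, (Q k i ^ 2 + Q k i * Q i k) := by
      rw [← Finset.sum_add_distrib]
      exact Finset.sum_congr rfl fun k _ => (Finset.sum_add_distrib).symm
    rw [h7, tri_double s (fun k i => Q k i ^ 2 + Q k i * Q i k)]
    congr 1
    · rw [Finset.mul_sum]
      exact Finset.sum_congr rfl fun k _ => by ring
    · refine Finset.sum_congr rfl fun k hk => ?_
      have e : s.filter (fun i => k < i) = univ.filter (fun l => k < l ∧ l ≠ N) := by
        rw [hs, Finset.filter_filter]
        exact Finset.filter_congr (fun a _ => and_comm)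
      rw [e]
      exact Finset.sum_congr rfl fun i _ => by ring
  have H12 : (∑ k ∈ s, (3 * Q N k ^ 2 + 3 * Q k N ^ 2 + 2 * Q k k ^ 2))
      = 3 * (∑ k ∈ s, Q N k ^ 2) + 3 * (∑ k ∈ s, Q k N ^ 2) + 2 * (∑ k ∈ s, Q k k ^ 2) := by
    simp only [Finset.sum_add_distrib, ← Finset.mul_sum]
  have H13 : (∑ k ∈ s, (Q N N * Q k k + Q N k * Q k N))
      = Q N N * (∑ k ∈ s, Q k k) + ∑ k ∈ s, Q N k * Q k N := by
    simp only [Finset.sum_add_distrib, ← Finset.mul_sum]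
  rw [H1, H2, H3, H3b, H3c, H4, H5, H6, H12, H13]
  linear_combination HS


lemma prod_pow_single (x : Fin n → ℝ) (c : Fin n) (e : ℕ) :
    ∏ t, x t ^ (if t = c then e else 0) = x c ^ e := by
  rw [show (fun t => x t ^ (if t = c then e else 0))
      = fun t => if t = c then x t ^ e else 1 from funext fun t => by split_ifs <;> simp]
  rw [Finset.prod_ite_eq' Finset.univ c (fun t => x t ^ e), if_pos (Finset.mem_univ c)]

lemma prod_pow_mfun (N k i l j : Fin n) (x : Fin n → ℝ) :
    ∏ t, x t ^ (mfun N k i l j t) = x N ^ 2 * (x k * x i * (x l * x j)) := by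
  simp only [mfun, pow_add, Finset.prod_mul_distrib]
  rw [prod_pow_single, prod_pow_single, prod_pow_single, prod_pow_single, prod_pow_single]
  simp [pow_one]

lemma sumD' (N : Fin n) (P : Fin n → Fin n → ℝ) :
    ∑ k, ∑ l, ∑ i, ∑ j, (P k i * P l j) * D N k i l j
    = (∑ k, P k k)^2 + (∑ k, ∑ i, (P k i)^2) + (∑ k, ∑ i, P k i * P i k)
      + 4 * P N N * (∑ k, P k k) + 4 * (∑ i, P N i * P i N)
      + 2 * (∑ i, (P N i)^2) + 2 * (∑ k, (P k N)^2) := by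
  simp only [D, dl, mul_add, Finset.sum_add_distrib, mul_ite, ite_mul, mul_zero, zero_mul,
    mul_one, one_mul, Finset.sum_ite_irrel, Finset.sum_const_zero,
    Finset.sum_ite_eq, Finset.sum_ite_eq', Finset.mem_univ, if_true]
  rw [show (∑ k, P k k)^2 = ∑ x, ∑ y, P x x * P y y from by
    rw [sq, Finset.sum_mul_sum]]
  simp only [Finset.mul_sum]
  have A1 : ∑ x, ∑ y, P x y * P x y = ∑ x, ∑ y, P x y ^ 2 :=
    Finset.sum_congr rfl fun x _ => Finset.sum_congr rfl fun y _ => by ring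
  have A2 : (∑ x, P N N * P x x * 2) + ∑ x, P x x * P N N * 2 = ∑ x, 4 * P N N * P x x := by
    rw [← Finset.sum_add_distrib]; exact Finset.sum_congr rfl fun x _ => by ring
  have A3 : ∑ x, P N x * P N x * 2 = ∑ x, 2 * P N x ^ 2 :=
    Finset.sum_congr rfl fun x _ => by ring
  have A4 : ∑ x, P x N * P x N * 2 = ∑ x, 2 * P x N ^ 2 :=
    Finset.sum_congr rfl fun x _ => by ring
  have A5 : (∑ x, P N x * P x N * 2) + ∑ x, P x N * P N x * 2 = ∑ x, 4 * (P N x * P x N) := by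
    rw [← Finset.sum_add_distrib]; exact Finset.sum_congr rfl fun x _ => by ring
  linear_combination A1 + A2 + A3 + A4 + A5

lemma momentD (hn : 3 ≤ n) (N k i l j : Fin n) :
    (∫ ω : sphere (0 : EuclideanSpace ℝ (Fin n)) 1,
        ((ω : EuclideanSpace ℝ (Fin n)) N) ^ 2 *
          (((ω : EuclideanSpace ℝ (Fin n)) k) * ((ω : EuclideanSpace ℝ (Fin n)) i) *
            (((ω : EuclideanSpace ℝ (Fin n)) l) * ((ω : EuclideanSpace ℝ (Fin n)) j)))
      ∂(sphereMeasure n))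
    = sphereArea n / ((n:ℝ) * ((n:ℝ)+2) * ((n:ℝ)+4)) * D N k i l j := by
  have h := sphere_moment n hn (mfun N k i l j) (mfun_sum N k i l j)
  rw [← prodg6_eq_D]
  rw [← h]
  refine integral_congr_ae (Filter.Eventually.of_forall fun ω => ?_)
  exact (prod_pow_mfun N k i l j (fun t => (ω : EuclideanSpace ℝ (Fin n)) t)).symm


/-- The value of `K₃ = ∫_{𝕊^{n-1}} ω_N² (Σₖ ωₖ (ω·Pₖ))² dω` for `n ≥ 3`. -/
theorem sphere_integral_K3 (n : ℕ) (hn : 3 ≤ n)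
    (P : Fin n → EuclideanSpace ℝ (Fin n)) (N : Fin n) :
    (∫ ω : sphere (0 : EuclideanSpace ℝ (Fin n)) 1,
        ((ω : EuclideanSpace ℝ (Fin n)) N) ^ 2 *
          (∑ k, ((ω : EuclideanSpace ℝ (Fin n)) k) *
            (inner ℝ (ω : EuclideanSpace ℝ (Fin n)) (P k) : ℝ)) ^ 2
      ∂(sphereMeasure n))
    = sphereArea n / (n * (n + 2) * (n + 4)) *
      (15 * (P N N) ^ 2
        + ∑ k ∈ univ.filter (fun k => k ≠ N),
            (3 * (P N k) ^ 2 + 3 * (P k N) ^ 2 + 2 * (P k k) ^ 2)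
        + (∑ k ∈ univ.filter (fun k => k ≠ N), P k k) ^ 2
        + 6 * ∑ k ∈ univ.filter (fun k => k ≠ N), (P N N * P k k + P N k * P k N)
        + ∑ k ∈ univ.filter (fun k => k ≠ N),
            ∑ ℓ ∈ univ.filter (fun ℓ => k < ℓ ∧ ℓ ≠ N), (P k ℓ + P ℓ k) ^ 2) := by
  classical
  haveI : CompactSpace (sphere (0 : EuclideanSpace ℝ (Fin n)) 1) :=
    isCompact_iff_compactSpace.mp (isCompact_sphere 0 1)
  haveI : IsFiniteMeasure (sphereMeasure n) := by
    unfold sphereMeasure; infer_instance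
  set Q : Fin n → Fin n → ℝ := fun k i => P k i with hQ
  have hexp : ∀ ω : sphere (0 : EuclideanSpace ℝ (Fin n)) 1,
      ((ω : EuclideanSpace ℝ (Fin n)) N) ^ 2 *
          (∑ k, ((ω : EuclideanSpace ℝ (Fin n)) k) *
            (inner ℝ (ω : EuclideanSpace ℝ (Fin n)) (P k) : ℝ)) ^ 2
      = ∑ p : (Fin n × Fin n) × Fin n × Fin n,
          (Q p.1.1 p.2.1 * Q p.1.2 p.2.2) *
            (((ω : EuclideanSpace ℝ (Fin n)) N) ^ 2 *
              (((ω : EuclideanSpace ℝ (Fin n)) p.1.1) * ((ω : EuclideanSpace ℝ (Fin n)) p.2.1) *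
              (((ω : EuclideanSpace ℝ (Fin n)) p.1.2) * ((ω : EuclideanSpace ℝ (Fin n)) p.2.2)))) := by
    intro ω
    set x : Fin n → ℝ := fun t => (ω : EuclideanSpace ℝ (Fin n)) t with hx
    have hin : ∀ k, (inner ℝ (ω : EuclideanSpace ℝ (Fin n)) (P k) : ℝ) = ∑ i, x i * Q k i := by
      intro k
      rw [PiLp.inner_apply]
      simp only [Real.inner_apply]
      rfl
    calc (x N) ^ 2 * (∑ k, x k * (inner ℝ (ω : EuclideanSpace ℝ (Fin n)) (P k) : ℝ)) ^ 2
        = (x N) ^ 2 * ((∑ k, ∑ i, Q k i * (x k * x i)) *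
            (∑ l, ∑ j, Q l j * (x l * x j))) := by
          rw [sq, sq]
          congr 2 <;>
          · refine Finset.sum_congr rfl fun k _ => ?_
            rw [hin k, Finset.mul_sum]
            exact Finset.sum_congr rfl fun i _ => by ring
      _ = (x N) ^ 2 * (∑ k, ∑ l, (∑ i, Q k i * (x k * x i)) * (∑ j, Q l j * (x l * x j))) := by
          rw [Finset.sum_mul_sum]
      _ = (x N) ^ 2 * (∑ k, ∑ l, ∑ i, ∑ j, (Q k i * (x k * x i)) * (Q l j * (x l * x j))) := by
          congr 1
          refine Finset.sum_congr rfl fun k _ => Finset.sum_congr rfl fun l _ => ?_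
          rw [Finset.sum_mul_sum]
      _ = ∑ k, ∑ l, ∑ i, ∑ j, (Q k i * Q l j) * ((x N) ^ 2 * (x k * x i * (x l * x j))) := by
          simp only [Finset.mul_sum]
          refine Finset.sum_congr rfl fun k _ => Finset.sum_congr rfl fun l _ =>
            Finset.sum_congr rfl fun i _ => Finset.sum_congr rfl fun j _ => by ring
      _ = ∑ p : (Fin n × Fin n) × Fin n × Fin n,
          (Q p.1.1 p.2.1 * Q p.1.2 p.2.2) *
            ((x N) ^ 2 * ((x p.1.1) * (x p.2.1) * ((x p.1.2) * (x p.2.2)))) := by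
          simp only [Fintype.sum_prod_type]
  rw [integral_congr_ae (Filter.Eventually.of_forall hexp)]
  have hcont : ∀ t : Fin n, Continuous
      (fun ω : sphere (0 : EuclideanSpace ℝ (Fin n)) 1 => (ω : EuclideanSpace ℝ (Fin n)) t) :=
    fun t => (EuclideanSpace.proj t).continuous.comp continuous_subtype_val
  have hint : ∀ p : (Fin n × Fin n) × Fin n × Fin n,
      Integrable (fun ω : sphere (0 : EuclideanSpace ℝ (Fin n)) 1 =>
        (Q p.1.1 p.2.1 * Q p.1.2 p.2.2) *
          (((ω : EuclideanSpace ℝ (Fin n)) N) ^ 2 *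
            (((ω : EuclideanSpace ℝ (Fin n)) p.1.1) * ((ω : EuclideanSpace ℝ (Fin n)) p.2.1) *
            (((ω : EuclideanSpace ℝ (Fin n)) p.1.2) * ((ω : EuclideanSpace ℝ (Fin n)) p.2.2)))))
        (sphereMeasure n) := by
    intro p
    apply Continuous.integrable_of_hasCompactSupport
    · exact continuous_const.mul ((((hcont N).pow 2).mul
        ((((hcont p.1.1).mul (hcont p.2.1))).mul ((hcont p.1.2).mul (hcont p.2.2)))))
    · exact HasCompactSupport.of_compactSpace _
  rw [MeasureTheory.integral_finset_sum Finset.univ (fun p _ => hint p)]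
  have hmom : ∀ p : (Fin n × Fin n) × Fin n × Fin n,
      (∫ ω : sphere (0 : EuclideanSpace ℝ (Fin n)) 1,
        (Q p.1.1 p.2.1 * Q p.1.2 p.2.2) *
          (((ω : EuclideanSpace ℝ (Fin n)) N) ^ 2 *
            (((ω : EuclideanSpace ℝ (Fin n)) p.1.1) * ((ω : EuclideanSpace ℝ (Fin n)) p.2.1) *
            (((ω : EuclideanSpace ℝ (Fin n)) p.1.2) * ((ω : EuclideanSpace ℝ (Fin n)) p.2.2))))
          ∂(sphereMeasure n))
      = (Q p.1.1 p.2.1 * Q p.1.2 p.2.2) *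
          (sphereArea n / ((n:ℝ) * ((n:ℝ)+2) * ((n:ℝ)+4)) * D N p.1.1 p.2.1 p.1.2 p.2.2) := by
    intro p
    rw [MeasureTheory.integral_const_mul]
    rw [momentD hn N p.1.1 p.2.1 p.1.2 p.2.2]
  rw [Finset.sum_congr rfl (fun p _ => hmom p)]
  have hre : ∑ p : (Fin n × Fin n) × Fin n × Fin n,
      (Q p.1.1 p.2.1 * Q p.1.2 p.2.2) *
        (sphereArea n / ((n:ℝ) * ((n:ℝ)+2) * ((n:ℝ)+4)) * D N p.1.1 p.2.1 p.1.2 p.2.2)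
      = sphereArea n / ((n:ℝ) * ((n:ℝ)+2) * ((n:ℝ)+4)) *
          ∑ k, ∑ l, ∑ i, ∑ j, (Q k i * Q l j) * D N k i l j := by
    simp only [Finset.mul_sum]
    simp only [Fintype.sum_prod_type]
    refine Finset.sum_congr rfl fun k _ => Finset.sum_congr rfl fun l _ =>
      Finset.sum_congr rfl fun i _ => Finset.sum_congr rfl fun j _ => by ring
  rw [hre, sumD' N Q, split_at_N N Q]
end
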